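/- arXiv:2010.08637 — 14 statements merged into one kernel-verified Lean document; each statement's English description precedes it below -/
import Mathlib

section
/- For every preference profile P over a candidate set C with a consistent misrepresentation function ρ, and every optimal k-assignment w, the map ŵ defined by letting ŵ(v) be v's most preferred candidate in w(V) is a k-assignment satisfying ŵ(V) ⊆ w(V) and Φ_ρ(P, ŵ) ≤ Φ_ρ(P, w); consequently ŵ is a canonical k-assignment, so a canonical optimal k-assignment always exists. -/
/-- transforming an optimal `k`-assignment into a canonical one.
Voters form a finite type `V`, candidates are `Fin m`, and each voter's linear
order is represented by an injective ranking function (lower rank = more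
preferred, i.e. `c ≻_v c'` iff `rank v c < rank v c'`). -/
theorem stmt0 {V : Type*} [Fintype V] [DecidableEq V] {m : ℕ}
    (rank : V → Fin m → ℕ)
    (hrank : ∀ v, Function.Injective (rank v))
    (ρ : V → Fin m → ℚ)
    (hcons : ∀ v (c c' : Fin m), rank v c < rank v c' → ρ v c ≤ ρ v c')
    (k : ℕ)
    (w : V → Fin m)
    (hw_k : (Finset.univ.image w).card ≤ k)
    (hw_opt : ∀ w' : V → Fin m, (Finset.univ.image w').card ≤ k →
      ∑ v, ρ v (w v) ≤ ∑ v, ρ v (w' v))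
    (wHat : V → Fin m)
    (hwHat : ∀ v, wHat v ∈ Finset.univ.image w ∧
      ∀ c ∈ Finset.univ.image w, rank v (wHat v) ≤ rank v c) :
    (Finset.univ.image wHat).card ≤ k ∧
    Finset.univ.image wHat ⊆ Finset.univ.image w ∧
    (∑ v, ρ v (wHat v)) ≤ ∑ v, ρ v (w v) ∧
    ((∀ w' : V → Fin m, (Finset.univ.image w').card ≤ k →
        ∑ v, ρ v (wHat v) ≤ ∑ v, ρ v (w' v)) ∧
      ∀ v, ∀ c ∈ Finset.univ.image wHat, rank v (wHat v) ≤ rank v c) := by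
  have hsub : Finset.univ.image wHat ⊆ Finset.univ.image w := by
    intro c hc
    rcases Finset.mem_image.mp hc with ⟨v, _, rfl⟩
    exact (hwHat v).1
  have hpt : ∀ v, ρ v (wHat v) ≤ ρ v (w v) := by
    intro v
    have h := (hwHat v).2 (w v) (Finset.mem_image_of_mem w (Finset.mem_univ v))
    rcases lt_or_eq_of_le h with h | h
    · exact hcons v _ _ h
    · rw [hrank v h]
  have hsum : (∑ v, ρ v (wHat v)) ≤ ∑ v, ρ v (w v) :=
    Finset.sum_le_sum fun v _ => hpt v
  have hcard : (Finset.univ.image wHat).card ≤ k :=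
    le_trans (Finset.card_le_card hsub) hw_k
  refine ⟨hcard, hsub, hsum, ⟨fun w' hw' => le_trans hsum (hw_opt w' hw'), ?_⟩⟩
  intro v c hc
  exact (hwHat v).2 c (hsub hc)
end

section
/- For every profile P over candidate set C that is single-crossing on a tree T with vertex set V, every k ≤ |C|, and every canonical k-assignment w for P, the assignment w is connected: for every candidate c ∈ C, the inverse image w⁻¹(c) induces a (possibly empty) subtree of T, i.e., a connected subgraph. -/
/-- for preferences single-crossing on a tree, every canonical
`k`-assignment is connected: the preimage of every candidate induces a
(possibly empty) subtree, i.e. any two voters assigned to `c` are joined by a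
walk all of whose vertices are assigned to `c`. -/
theorem stmt1 {V : Type*} [Fintype V] [DecidableEq V] {m : ℕ}
    (G : SimpleGraph V) (hG : G.IsTree)
    (rank : V → Fin m → ℕ)
    (hrank : ∀ v, Function.Injective (rank v))
    (hsc : ∀ v₁ v₂ v₃ : V, (∃ p : G.Walk v₁ v₃, p.IsPath ∧ v₂ ∈ p.support) →
      ∀ c c' : Fin m, c ≠ c' →
        ¬(rank v₁ c < rank v₁ c' ∧ rank v₂ c' < rank v₂ c ∧ rank v₃ c < rank v₃ c'))
    (ρ : V → Fin m → ℚ)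
    (hcons : ∀ v (c c' : Fin m), rank v c < rank v c' → ρ v c ≤ ρ v c')
    (k : ℕ) (hk : k ≤ m)
    (w : V → Fin m)
    (hw_k : (Finset.univ.image w).card ≤ k)
    (hw_opt : ∀ w' : V → Fin m, (Finset.univ.image w').card ≤ k →
      ∑ v, ρ v (w v) ≤ ∑ v, ρ v (w' v))
    (hw_can : ∀ v, ∀ c ∈ Finset.univ.image w, rank v (w v) ≤ rank v c) :
    ∀ c : Fin m, ∀ x y : V, w x = c → w y = c →
      ∃ p : G.Walk x y, ∀ u ∈ p.support, w u = c := by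
  intro c x y hx hy
  obtain ⟨p0⟩ := hG.isConnected.preconnected x y
  set p := p0.toPath.1 with hp
  refine ⟨p, ?_⟩
  intro u hu
  by_contra hne
  set c' := w u with hc'
  have hmem : c' ∈ Finset.univ.image w := Finset.mem_image_of_mem w (Finset.mem_univ u)
  have hmem' : c ∈ Finset.univ.image w := by
    rw [← hx]; exact Finset.mem_image_of_mem w (Finset.mem_univ x)
  have hcc' : c ≠ c' := fun h => hne h.symm
  have h1 : rank x c < rank x c' := by
    have := hw_can x c' hmem
    rw [hx] at this
    exact lt_of_le_of_ne this (fun h => hcc' (hrank x h))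
  have h3 : rank y c < rank y c' := by
    have := hw_can y c' hmem
    rw [hy] at this
    exact lt_of_le_of_ne this (fun h => hcc' (hrank y h))
  have h2 : rank u c' < rank u c := by
    have := hw_can u c hmem'
    rw [← hc'] at this
    exact lt_of_le_of_ne this (fun h => hcc' (hrank u h.symm))
  exact hsc x u y ⟨p, p0.toPath.2, hu⟩ c c' hcc' ⟨h1, h2, h3⟩
end

section
/- Let P be a profile over C = [m] that is single-crossing on a tree T, and suppose voter v ranks the candidates as 1 ≻_v 2 ≻_v ⋯ ≻_v m. Then every canonical k-assignment w for P is non-decreasing along every simple path in T starting at v: if x and y are voters on a simple path starting at v with x preceding y, then w(x) ≤ w(y). -/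
/-- for preferences single-crossing on a tree, if voter `v` ranks
the candidates as `1 ≻ 2 ≻ ⋯ ≻ m` (i.e. its ranking is the identity), then any
canonical `k`-assignment is non-decreasing along every simple path starting
at `v`. -/
theorem stmt2 {V : Type*} [Fintype V] [DecidableEq V] {m k : ℕ}
    (G : SimpleGraph V) (hG : G.IsTree)
    (rank : V → Fin m → ℕ)
    (hrank : ∀ v, Function.Injective (rank v))
    (hsc : ∀ v₁ v₂ v₃ : V, (∃ p : G.Walk v₁ v₃, p.IsPath ∧ v₂ ∈ p.support) →
      ∀ c c' : Fin m, c ≠ c' →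
        ¬(rank v₁ c < rank v₁ c' ∧ rank v₂ c' < rank v₂ c ∧ rank v₃ c < rank v₃ c'))
    (v : V) (hv : ∀ c : Fin m, rank v c = (c : ℕ))
    (ρ : V → Fin m → ℚ)
    (hcons : ∀ u (c c' : Fin m), rank u c < rank u c' → ρ u c ≤ ρ u c')
    (w : V → Fin m)
    (hw_k : (Finset.univ.image w).card ≤ k)
    (hw_opt : ∀ w' : V → Fin m, (Finset.univ.image w').card ≤ k →
      ∑ u, ρ u (w u) ≤ ∑ u, ρ u (w' u))
    (hw_can : ∀ u, ∀ c ∈ Finset.univ.image w, rank u (w u) ≤ rank u c) :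
    ∀ z : V, ∀ p : G.Walk v z, p.IsPath →
      ∀ x y : V, List.Sublist [x, y] p.support → w x ≤ w y := by
  intro z p hp x y hsub
  by_contra hlt
  push_neg at hlt
  -- notation
  have hyp : y ∈ p.support := hsub.subset (by simp)
  set q := p.takeUntil y hyp with hq_def
  have hq : q.IsPath := hp.takeUntil hyp
  have hsplit : p.support = q.support ++ (p.dropUntil y hyp).support.tail := by
    conv_lhs => rw [← SimpleGraph.Walk.take_spec p hyp]
    rw [SimpleGraph.Walk.support_append]
  have hnodup : p.support.Nodup := hp.support_nodup
  have hyq : y ∈ q.support := SimpleGraph.Walk.end_mem_support q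
  have hdisj : List.Disjoint q.support (p.dropUntil y hyp).support.tail := by
    rw [hsplit, List.nodup_append] at hnodup
    exact fun a ha hb => hnodup.2.2 a ha a hb rfl
  have hxq : x ∈ q.support := by
    rw [hsplit] at hsub
    obtain ⟨l1, l2, heq, h1, h2⟩ := List.sublist_append_iff.mp hsub
    rcases l1 with _ | ⟨a, _ | ⟨b, t⟩⟩
    · simp only [List.nil_append] at heq
      subst heq
      exact absurd (h2.subset (by simp)) (hdisj hyq)
    · injection heq with hax _
      subst hax
      exact h1.subset (by simp)
    · injection heq with hax _
      subst hax
      exact h1.subset (by simp)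
  have hne : w y ≠ w x := ne_of_lt hlt
  have hcx : rank x (w x) < rank x (w y) := by
    refine lt_of_le_of_ne (hw_can x (w y) ?_) (fun h => hne.symm (hrank x h))
    exact Finset.mem_image.mpr ⟨y, Finset.mem_univ y, rfl⟩
  have hcy : rank y (w y) < rank y (w x) := by
    refine lt_of_le_of_ne (hw_can y (w x) ?_) (fun h => hne (hrank y h))
    exact Finset.mem_image.mpr ⟨x, Finset.mem_univ x, rfl⟩
  have hvr : rank v (w y) < rank v (w x) := by
    rw [hv, hv]; exact_mod_cast hlt
  exact hsc v x y ⟨q, hq, hxq⟩ (w y) (w x) hne ⟨hvr, hcx, hcy⟩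
end

section
/- Let P be a profile over C = [m] that is single-crossing with respect to the voter order v₁ ⊲ ⋯ ⊲ v_n, where the first voter ranks the candidates as 1 ≻_{v₁} 2 ≻_{v₁} ⋯ ≻_{v₁} m. Then every canonical k-assignment w_opt for P is monotone: for every pair of voters v_i, v_j with i < j, it holds that w_opt(v_i) ≤ w_opt(v_j). -/
/-- for preferences single-crossing on a line (voters `v_1 ⊲ ⋯ ⊲ v_n`,
indexed by `Fin n`), where the first voter ranks the candidates as
`1 ≻ 2 ≻ ⋯ ≻ m`, every canonical `k`-assignment is monotone. -/
theorem stmt3 {n m k : ℕ} (hn : 0 < n)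
    (rank : Fin n → Fin m → ℕ)
    (hrank : ∀ v, Function.Injective (rank v))
    (hsc : ∀ i j l : Fin n, i < j → j < l → ∀ c c' : Fin m, c ≠ c' →
      ¬(rank i c < rank i c' ∧ rank j c' < rank j c ∧ rank l c < rank l c'))
    (hfirst : ∀ c : Fin m, rank ⟨0, hn⟩ c = (c : ℕ))
    (ρ : Fin n → Fin m → ℚ)
    (hcons : ∀ v (c c' : Fin m), rank v c < rank v c' → ρ v c ≤ ρ v c')
    (w : Fin n → Fin m)
    (hw_k : (Finset.univ.image w).card ≤ k)
    (hw_opt : ∀ w' : Fin n → Fin m, (Finset.univ.image w').card ≤ k →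
      ∑ v, ρ v (w v) ≤ ∑ v, ρ v (w' v))
    (hw_can : ∀ v, ∀ c ∈ Finset.univ.image w, rank v (w v) ≤ rank v c) :
    ∀ i j : Fin n, i < j → w i ≤ w j := by
  intro i j hij
  by_contra h
  push_neg at h
  have hne : w j ≠ w i := ne_of_lt h
  have hwjmem : w j ∈ Finset.univ.image w := Finset.mem_image_of_mem w (Finset.mem_univ j)
  have hwimem : w i ∈ Finset.univ.image w := Finset.mem_image_of_mem w (Finset.mem_univ i)
  have hi : rank i (w i) < rank i (w j) :=
    lt_of_le_of_ne (hw_can i (w j) hwjmem) (fun he => hne.symm (hrank i he))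
  have hj : rank j (w j) < rank j (w i) :=
    lt_of_le_of_ne (hw_can j (w i) hwimem) (fun he => hne (hrank j he))
  rcases eq_or_lt_of_le (Nat.zero_le i.val) with h0 | h0
  · have hi0 : i = ⟨0, hn⟩ := Fin.ext h0.symm
    rw [hi0, hfirst, hfirst] at hi
    rw [hi0] at h
    exact absurd hi (not_lt_of_gt h)
  · have h0i : (⟨0, hn⟩ : Fin n) < i := h0
    have h0r : rank ⟨0, hn⟩ (w j) < rank ⟨0, hn⟩ (w i) := by
      rw [hfirst, hfirst]; exact h
    exact hsc ⟨0, hn⟩ i j h0i hij (w j) (w i) hne ⟨h0r, hi, hj⟩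
end

section
/- Let P be a profile over C = [m] with voters v₁, …, v_n that is single-crossing with respect to the order v₁ ⊲ ⋯ ⊲ v_n, let ρ be a misrepresentation function consistent with P, and let k ≤ min{n, m}. Define ω(i,j) = min_{c∈C} Σ_{ℓ=i+1}^{j} ρ(v_ℓ, c) for 0 ≤ i < j ≤ n. Then the minimum over all sequences 0 = a₀ < a₁ < ⋯ < a_k = n of Σ_{t=1}^{k} ω(a_{t−1}, a_t) equals the minimum of Φ_ρ(P,w) over all k-assignments w. -/
/-- The weight `ω(i,j)`: the minimum over candidates `c` of the total
dissatisfaction of voters `v_{i+1}, …, v_j` (0-indexed: voters with indices in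
`[i, j)`) when all of them are represented by `c`. -/
noncomputable def omegaFn {C : Type*} [Fintype C] [Nonempty C] {n : ℕ}
    (ρ : Fin n → C → ℚ) (i j : ℕ) : ℚ :=
  Finset.univ.inf' Finset.univ_nonempty fun c : C =>
    ∑ l ∈ Finset.Ico i j, if h : l < n then ρ ⟨l, h⟩ c else 0

namespace Stmt4Aux

variable {C : Type*} [Fintype C] [Nonempty C] {n : ℕ}

/-- Extended dissatisfaction function on `ℕ`. -/
noncomputable def rho' (ρ : Fin n → C → ℚ) (l : ℕ) (c : C) : ℚ :=
  if h : l < n then ρ ⟨l, h⟩ c else 0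

lemma omegaFn_eq (ρ : Fin n → C → ℚ) (i j : ℕ) :
    omegaFn ρ i j = Finset.univ.inf' Finset.univ_nonempty
      (fun c : C => ∑ l ∈ Finset.Ico i j, rho' ρ l c) := rfl

lemma omegaFn_le (ρ : Fin n → C → ℚ) (i j : ℕ) (c : C) :
    omegaFn ρ i j ≤ ∑ l ∈ Finset.Ico i j, rho' ρ l c := by
  rw [omegaFn_eq]
  exact Finset.inf'_le _ (Finset.mem_univ c)

lemma omegaFn_attained (ρ : Fin n → C → ℚ) (i j : ℕ) :
    ∃ c : C, omegaFn ρ i j = ∑ l ∈ Finset.Ico i j, rho' ρ l c := by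
  rw [omegaFn_eq]
  obtain ⟨c, _, hc⟩ := Finset.exists_mem_eq_inf' (Finset.univ_nonempty (α := C))
    (fun c : C => ∑ l ∈ Finset.Ico i j, rho' ρ l c)
  exact ⟨c, hc⟩

lemma mono_of_step {a : ℕ → ℕ} {k : ℕ} (h : ∀ t < k, a t ≤ a (t + 1)) :
    ∀ t ≤ k, ∀ s ≤ t, a s ≤ a t := by
  intro t
  induction t with
  | zero =>
    intro _ s hs
    have : s = 0 := Nat.le_zero.mp hs
    simp [this]
  | succ t ih =>
    intro ht s hs
    rcases Nat.lt_succ_iff_lt_or_eq.mp (Nat.lt_succ_of_le hs) with h1 | h1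
    · exact le_trans (ih (by omega) s (by omega)) (h t (by omega))
    · exact h1 ▸ le_refl _

lemma sum_Ico_telescope (F : ℕ → ℚ) (a : ℕ → ℕ) :
    ∀ k : ℕ, (∀ t < k, a t ≤ a (t + 1)) →
      ∑ t ∈ Finset.range k, ∑ l ∈ Finset.Ico (a t) (a (t + 1)), F l
        = ∑ l ∈ Finset.Ico (a 0) (a k), F l := by
  intro k
  induction k with
  | zero => simp
  | succ k ih =>
    intro h
    rw [Finset.sum_range_succ, ih (fun t (ht : t < k) => h t (by omega))]
    exact Finset.sum_Ico_consecutive F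
      (mono_of_step (fun t (ht : t < k) => h t (by omega)) k le_rfl 0 (Nat.zero_le _))
      (h k (by omega))

lemma key [DecidableEq C] (ρ : Fin n → C → ℚ) (f : ℕ → C)
    (hcont : ∀ i l j : ℕ, i ≤ l → l ≤ j → j < n → f i = f j → f l = f i) :
    ∀ k' i : ℕ, i + k' ≤ n → ((Finset.Ico i n).image f).card ≤ k' →
    ∃ a : ℕ → ℕ, a 0 = i ∧ a k' = n ∧ (∀ t < k', a t < a (t + 1)) ∧
      ∑ t ∈ Finset.range k', omegaFn ρ (a t) (a (t + 1))
        ≤ ∑ l ∈ Finset.Ico i n, rho' ρ l (f l) := by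
  intro k'
  induction k' with
  | zero =>
    intro i hin hcard
    have hempty : Finset.Ico i n = ∅ := by
      by_contra h
      have h1 : ((Finset.Ico i n).image f).Nonempty :=
        (Finset.nonempty_of_ne_empty h).image f
      have := Finset.card_pos.mpr h1
      omega
    have hi : i = n := by
      have := Finset.Ico_eq_empty_iff.mp hempty
      omega
    exact ⟨fun _ => n, hi ▸ rfl, rfl, by omega, by simp [hempty]⟩
  | succ k' ih =>
    intro i hin hcard
    have hQex : ∃ l, i < l ∧ (l = n ∨ f l ≠ f i) := ⟨n, by omega, Or.inl rfl⟩
    set jmax := Nat.find hQex with hjmaxdef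
    have hjmaxspec : i < jmax ∧ (jmax = n ∨ f jmax ≠ f i) := Nat.find_spec hQex
    have hjmaxle : jmax ≤ n := Nat.find_le ⟨by omega, Or.inl rfl⟩
    set j := min jmax (n - k') with hjdef
    have hij : i < j := by
      have : i < n - k' := by omega
      exact lt_min hjmaxspec.1 this
    have hjk : j + k' ≤ n := by
      have : j ≤ n - k' := min_le_right _ _
      omega
    have hjn : j ≤ n := le_trans (min_le_left _ _) hjmaxle
    have hconst : ∀ l, i ≤ l → l < j → f l = f i := by
      intro l hl hl2
      rcases Nat.eq_or_lt_of_le hl with h1 | h1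
      · rw [← h1]
      · have hl3 : l < jmax := lt_of_lt_of_le hl2 (min_le_left _ _)
        have hmin := Nat.find_min hQex hl3
        push_neg at hmin
        have hln : l ≠ n := by omega
        exact (hmin h1).2
    have hcard2 : ((Finset.Ico j n).image f).card ≤ k' := by
      by_cases hc : jmax ≤ n - k'
      · have hjj : j = jmax := min_eq_left hc
        rcases hjmaxspec.2 with h1 | h2
        · have : j = n := by omega
          simp [this]
        · have hsub : (Finset.Ico j n).image f ⊆ ((Finset.Ico i n).image f).erase (f i) := by
            intro c hc'
            obtain ⟨l, hl, rfl⟩ := Finset.mem_image.mp hc'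
            rw [Finset.mem_Ico] at hl
            refine Finset.mem_erase.mpr ⟨?_, Finset.mem_image.mpr ⟨l, Finset.mem_Ico.mpr ⟨by omega, hl.2⟩, rfl⟩⟩
            intro heq
            exact h2 (hcont i jmax l (by omega) (by omega) hl.2 heq.symm)
          have hmem : f i ∈ (Finset.Ico i n).image f :=
            Finset.mem_image.mpr ⟨i, Finset.mem_Ico.mpr ⟨le_rfl, by omega⟩, rfl⟩
          calc ((Finset.Ico j n).image f).card
              ≤ (((Finset.Ico i n).image f).erase (f i)).card := Finset.card_le_card hsub
            _ = ((Finset.Ico i n).image f).card - 1 := Finset.card_erase_of_mem hmem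
            _ ≤ k' := by omega
      · have hjj : j = n - k' := min_eq_right (by omega)
        calc ((Finset.Ico j n).image f).card ≤ (Finset.Ico j n).card := Finset.card_image_le
          _ = n - j := Nat.card_Ico _ _
          _ ≤ k' := by omega
    obtain ⟨a', ha0, hak, hstrict, hcost⟩ := ih j hjk hcard2
    refine ⟨fun t => if t = 0 then i else a' (t - 1), if_pos rfl, by simp [hak], ?_, ?_⟩
    · intro t ht
      rcases Nat.eq_zero_or_pos t with h1 | h1
      · subst h1; simpa [ha0] using hij
      · have h2 : t ≠ 0 := by omega
        have h3 : t + 1 ≠ 0 := by omega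
        simp only [h2, h3, if_false]
        have := hstrict (t - 1) (by omega)
        have h4 : t - 1 + 1 = t + 1 - 1 := by omega
        rwa [h4] at this
    · rw [Finset.sum_range_succ']
      simp only [Nat.succ_ne_zero, if_false, if_pos rfl, Nat.add_sub_cancel, Nat.zero_lt_one.ne']
      have hfirst : omegaFn ρ i (a' 0) ≤ ∑ l ∈ Finset.Ico i j, rho' ρ l (f l) := by
        rw [ha0]
        refine le_trans (omegaFn_le ρ i j (f i)) (le_of_eq ?_)
        refine Finset.sum_congr rfl fun l hl => ?_
        rw [Finset.mem_Ico] at hl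
        rw [hconst l hl.1 hl.2]
      have hrest : ∑ t ∈ Finset.range k', omegaFn ρ (a' ((t + 1) - 1)) (a' ((t + 1 + 1) - 1))
          ≤ ∑ l ∈ Finset.Ico j n, rho' ρ l (f l) := by
        simpa using hcost
      calc (∑ t ∈ Finset.range k', omegaFn ρ (a' ((t + 1) - 1)) (a' ((t + 1 + 1) - 1)))
            + omegaFn ρ i (a' 0)
          ≤ (∑ l ∈ Finset.Ico j n, rho' ρ l (f l)) + ∑ l ∈ Finset.Ico i j, rho' ρ l (f l) :=
            add_le_add hrest hfirst
        _ = ∑ l ∈ Finset.Ico i n, rho' ρ l (f l) := by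
            rw [add_comm]
            exact Finset.sum_Ico_consecutive _ (le_of_lt hij) hjn

lemma pathToAssign [DecidableEq C] (ρ : Fin n → C → ℚ) {k : ℕ} (hk : 0 < k) (a : ℕ → ℕ)
    (h0 : a 0 = 0) (hkn : a k = n) (hstrict : ∀ t < k, a t < a (t + 1)) :
    ∃ w : Fin n → C, (Finset.univ.image w).card ≤ k ∧
      ∑ v, ρ v (w v) = ∑ t ∈ Finset.range k, omegaFn ρ (a t) (a (t + 1)) := by
  classical
  have amono : ∀ t ≤ k, ∀ s ≤ t, a s ≤ a t :=
    mono_of_step (fun t ht => (hstrict t ht).le)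
  -- optimal candidate for each segment
  choose c hc using fun t => omegaFn_attained ρ (a t) (a (t + 1))
  -- segment index of voter l
  set τ : ℕ → ℕ := fun l => Nat.findGreatest (fun t => a t ≤ l) (k - 1) with hτdef
  have hτle : ∀ l, τ l ≤ k - 1 := fun l => Nat.findGreatest_le _
  have hτspec : ∀ t < k, ∀ l, a t ≤ l → l < a (t + 1) → τ l = t := by
    intro t ht l hal hla
    have hln : l < n := lt_of_lt_of_le hla (hkn ▸ amono k le_rfl (t + 1) (by omega))
    have hge : a (τ l) ≤ l :=
      Nat.findGreatest_spec (P := fun t => a t ≤ l) (Nat.zero_le _)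
        (by show a 0 ≤ l; rw [h0]; exact Nat.zero_le l)
    have hlt : l < a (τ l + 1) := by
      by_cases hτk : τ l + 1 = k
      · rw [hτk, hkn]; exact hln
      · have h1 : τ l + 1 ≤ k - 1 := by have := hτle l; omega
        have h2 : ¬ (a (τ l + 1) ≤ l) :=
          @Nat.findGreatest_is_greatest (τ l + 1) (fun t => a t ≤ l) (fun _ => inferInstance)
            (k - 1) (Nat.lt_succ_self _) h1
        omega
    by_contra hne
    rcases Nat.lt_or_ge (τ l) t with h1 | h1
    · have : a (τ l + 1) ≤ a t := amono t (by omega) (τ l + 1) (by omega)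
      omega
    · have h2 : t < τ l := by omega
      have : a (t + 1) ≤ a (τ l) := amono (τ l) (by have := hτle l; omega) (t + 1) (by omega)
      omega
  set g : ℕ → C := fun l => c (τ l) with hgdef
  refine ⟨fun v => g v.val, ?_, ?_⟩
  · have hsub : Finset.univ.image (fun v : Fin n => g v.val)
        ⊆ (Finset.range k).image c := by
      intro x hx
      obtain ⟨v, _, rfl⟩ := Finset.mem_image.mp hx
      exact Finset.mem_image.mpr ⟨τ v.val, Finset.mem_range.mpr (by have := hτle v.val; omega), rfl⟩
    calc (Finset.univ.image (fun v : Fin n => g v.val)).card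
        ≤ ((Finset.range k).image c).card := Finset.card_le_card hsub
      _ ≤ (Finset.range k).card := Finset.card_image_le
      _ = k := Finset.card_range k
  · have h1 : ∑ v : Fin n, ρ v (g v.val) = ∑ l ∈ Finset.range n, rho' ρ l (g l) := by
      rw [← Fin.sum_univ_eq_sum_range (fun l => rho' ρ l (g l)) n]
      refine Finset.sum_congr rfl fun v _ => ?_
      simp [rho', v.isLt]
    rw [h1]
    have h3 := sum_Ico_telescope (fun l => rho' ρ l (g l)) a k (fun t ht => (hstrict t ht).le)
    rw [h0, hkn, ← Finset.range_eq_Ico] at h3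
    rw [← h3]
    refine Finset.sum_congr rfl fun t ht => ?_
    rw [Finset.mem_range] at ht
    rw [hc t]
    refine Finset.sum_congr rfl fun l hl => ?_
    rw [Finset.mem_Ico] at hl
    have : τ l = t := hτspec t ht l hl.1 hl.2
    simp [hgdef, this]

end Stmt4Aux


/-- for single-crossing preferences, the minimum cost of a
`k`-link `0`–`n` path with respect to `ω` equals the minimum total
dissatisfaction over all `k`-assignments. -/
theorem stmt4 {n k : ℕ} {C : Type*} [Fintype C] [Nonempty C] [DecidableEq C]
    (hk : 0 < k) (hkn : k ≤ n) (hkm : k ≤ Fintype.card C)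
    (rank : Fin n → C → ℕ)
    (hrank : ∀ v, Function.Injective (rank v))
    (hsc : ∀ i j l : Fin n, i < j → j < l → ∀ c c' : C, c ≠ c' →
      ¬(rank i c < rank i c' ∧ rank j c' < rank j c ∧ rank l c < rank l c'))
    (ρ : Fin n → C → ℚ)
    (hcons : ∀ v (c c' : C), rank v c < rank v c' → ρ v c ≤ ρ v c') :
    ∃ μ : ℚ,
      IsLeast {x : ℚ | ∃ a : ℕ → ℕ, a 0 = 0 ∧ a k = n ∧ (∀ t < k, a t < a (t + 1)) ∧
        x = ∑ t ∈ Finset.range k, omegaFn ρ (a t) (a (t + 1))} μ ∧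
      IsLeast {x : ℚ | ∃ w : Fin n → C, (Finset.univ.image w).card ≤ k ∧
        x = ∑ v, ρ v (w v)} μ := by
  classical
  set S1 : Set ℚ := {x : ℚ | ∃ a : ℕ → ℕ, a 0 = 0 ∧ a k = n ∧ (∀ t < k, a t < a (t + 1)) ∧
        x = ∑ t ∈ Finset.range k, omegaFn ρ (a t) (a (t + 1))} with hS1
  have hn : 0 < n := lt_of_lt_of_le hk hkn
  -- S1 is nonempty
  have hne : S1.Nonempty := by
    refine ⟨_, ⟨fun t => if t < k then t else n, ?_, ?_, ?_, rfl⟩⟩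
    · simp [hk]
    · simp
    · intro t ht
      simp only [if_pos ht]
      by_cases h : t + 1 < k
      · simp only [if_pos h]; omega
      · simp only [if_neg h]; omega
  -- S1 is finite
  have hfin : S1.Finite := by
    have hsub : S1 ⊆ Set.range (fun b : Fin (k + 1) → Fin (n + 1) =>
        ∑ t : Fin k, omegaFn ρ (b t.castSucc).val (b t.succ).val) := by
      rintro x ⟨a, h0, hak, hstrict, rfl⟩
      have amono := Stmt4Aux.mono_of_step (fun t ht => (hstrict t ht).le)
      have hbnd : ∀ t : Fin (k + 1), a t.val < n + 1 := by
        intro t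
        have : a t.val ≤ n := hak ▸ amono k le_rfl t.val (Nat.lt_succ_iff.mp t.isLt)
        omega
      refine ⟨fun t => ⟨a t.val, hbnd t⟩, ?_⟩
      simp only
      rw [← Fin.sum_univ_eq_sum_range (fun t => omegaFn ρ (a t) (a (t + 1))) k]
      exact Finset.sum_congr rfl fun t _ => by
        simp [Fin.coe_castSucc, Fin.val_succ]
    exact Set.Finite.subset (Set.finite_range _) hsub
  have hne' : hfin.toFinset.Nonempty := by
    rwa [Set.Finite.toFinset_nonempty]
  set μ : ℚ := hfin.toFinset.min' hne' with hμ
  have hmem1 : μ ∈ S1 := by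
    have := hfin.toFinset.min'_mem hne'
    rwa [Set.Finite.mem_toFinset] at this
  have hlb1 : ∀ x ∈ S1, μ ≤ x := fun x hx =>
    hfin.toFinset.min'_le x (hfin.mem_toFinset.mpr hx)
  refine ⟨μ, ⟨hmem1, fun x hx => hlb1 x hx⟩, ?_, ?_⟩
  · -- sInf S1 is an assignment cost
    obtain ⟨a, h0, hak, hstrict, hval⟩ := hmem1
    obtain ⟨w0, hw0card, hw0sum⟩ := Stmt4Aux.pathToAssign ρ hk a h0 hak hstrict
    exact ⟨w0, hw0card, by rw [hval, ← hw0sum]⟩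
  · -- sInf S1 is a lower bound on assignment costs
    rintro x ⟨w, hwcard, rfl⟩
    have hNe : Nonempty (Fin n) := ⟨⟨0, hn⟩⟩
    have hD : (Finset.univ.image w).Nonempty := Finset.univ_nonempty.image w
    choose fav hfavmem hfavmin using
      fun v : Fin n => Finset.exists_min_image (Finset.univ.image w) (rank v) hD
    have hfavstrict : ∀ v (c : C), c ∈ Finset.univ.image w → c ≠ fav v →
        rank v (fav v) < rank v c := by
      intro v c hc hne'
      exact lt_of_le_of_ne (hfavmin v c hc) (fun h => hne' ((hrank v) h).symm)
    set f : ℕ → C := fun l => if h : l < n then fav ⟨l, h⟩ else fav ⟨0, hn⟩ with hf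
    have hfval : ∀ l (h : l < n), f l = fav ⟨l, h⟩ := fun l h => dif_pos h
    have hcont : ∀ i l j : ℕ, i ≤ l → l ≤ j → j < n → f i = f j → f l = f i := by
      intro i l j hil hlj hjn hfij
      have hin : i < n := by omega
      have hln : l < n := by omega
      rw [hfval i hin, hfval j hjn] at hfij
      rw [hfval l hln, hfval i hin]
      by_contra hne'
      have hij : i < l := by
        rcases Nat.lt_or_ge i l with h | h
        · exact h
        · have heq : l = i := by omega
          exact absurd (by subst heq; rfl) hne'
      have hlj' : l < j := by
        rcases Nat.lt_or_ge l j with h | h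
        · exact h
        · have heq : l = j := by omega
          refine absurd ?_ hne'
          subst heq
          exact hfij.symm
      refine hsc ⟨i, hin⟩ ⟨l, hln⟩ ⟨j, hjn⟩ (Fin.mk_lt_mk.mpr hij) (Fin.mk_lt_mk.mpr hlj')
        (fav ⟨i, hin⟩) (fav ⟨l, hln⟩) (fun h => hne' h.symm) ⟨?_, ?_, ?_⟩
      · exact hfavstrict ⟨i, hin⟩ (fav ⟨l, hln⟩) (hfavmem _) hne'
      · exact hfavstrict ⟨l, hln⟩ (fav ⟨i, hin⟩) (hfavmem _) (fun h => hne' h.symm)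
      · rw [hfij]
        refine hfavstrict ⟨j, hjn⟩ (fav ⟨l, hln⟩) (hfavmem _) ?_
        rw [← hfij]
        exact hne'
    have hcardb : ((Finset.Ico 0 n).image f).card ≤ k := by
      have hsub : (Finset.Ico 0 n).image f ⊆ Finset.univ.image w := by
        intro c hc
        obtain ⟨l, hl, rfl⟩ := Finset.mem_image.mp hc
        rw [Finset.mem_Ico] at hl
        rw [hfval l hl.2]
        exact hfavmem _
      exact le_trans (Finset.card_le_card hsub) hwcard
    obtain ⟨a2, ha20, ha2k, ha2strict, ha2cost⟩ :=
      Stmt4Aux.key ρ f hcont k 0 (by omega) hcardb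
    have hmemS1 : (∑ t ∈ Finset.range k, omegaFn ρ (a2 t) (a2 (t + 1))) ∈ S1 :=
      ⟨a2, ha20, ha2k, ha2strict, rfl⟩
    have hEq : ∑ l ∈ Finset.Ico 0 n, Stmt4Aux.rho' ρ l (f l) = ∑ v : Fin n, ρ v (fav v) := by
      rw [← Finset.range_eq_Ico,
        ← Fin.sum_univ_eq_sum_range (fun l => Stmt4Aux.rho' ρ l (f l)) n]
      refine Finset.sum_congr rfl fun v _ => ?_
      have h1 : Stmt4Aux.rho' ρ v.val (f v.val) = ρ ⟨v.val, v.isLt⟩ (f v.val) := dif_pos v.isLt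
      rw [h1, hfval v.val v.isLt, Fin.eta]
    have hle2 : ∑ v : Fin n, ρ v (fav v) ≤ ∑ v : Fin n, ρ v (w v) := by
      refine Finset.sum_le_sum fun v _ => ?_
      have hwv : w v ∈ Finset.univ.image w := Finset.mem_image_of_mem w (Finset.mem_univ v)
      by_cases h : w v = fav v
      · rw [h]
      · exact hcons v _ _ (hfavstrict v (w v) hwv h)
    calc μ ≤ ∑ t ∈ Finset.range k, omegaFn ρ (a2 t) (a2 (t + 1)) := hlb1 _ hmemS1
      _ ≤ ∑ l ∈ Finset.Ico 0 n, Stmt4Aux.rho' ρ l (f l) := ha2cost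
      _ = ∑ v : Fin n, ρ v (fav v) := hEq
      _ ≤ ∑ v : Fin n, ρ v (w v) := hle2
end

section
/- Suppose that for every three-voter profile (≻_x, ≻_y, ≻_z) over a candidate set C that is single-crossing with respect to the order x ⊲ y ⊲ z, and every misrepresentation function ρ' consistent with it, the inequality min_c(ρ'(x,c)+ρ'(y,c)) + min_c(ρ'(y,c)+ρ'(z,c)) ≤ min_c(ρ'(x,c)+ρ'(y,c)+ρ'(z,c)) + min_c ρ'(y,c) holds. Then for every n-voter profile over C single-crossing with respect to v₁ ⊲ ⋯ ⊲ v_n with a consistent misrepresentation function ρ, the weight function ω(i,j) = min_{c∈C} Σ_{ℓ=i+1}^{j} ρ(v_ℓ, c) satisfies the concave Monge property: ω(i,j) + ω(i+1,j+1) ≤ ω(i,j+1) + ω(i+1,j) for all i, j with 0 < i+1 < j < n. -/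
lemma card_filter_lt_iff {α β : Type*} [Fintype α] [LinearOrder β]
    (f : α → β) (a b : α) :
    (Finset.univ.filter fun d => f d < f a).card <
      (Finset.univ.filter fun d => f d < f b).card ↔ f a < f b := by
  classical
  constructor
  · intro h
    by_contra hle
    push_neg at hle
    have hsub : (Finset.univ.filter fun d => f d < f b) ⊆
        (Finset.univ.filter fun d => f d < f a) := by
      intro d hd
      simp only [Finset.mem_filter, Finset.mem_univ, true_and] at *
      exact lt_of_lt_of_le hd hle
    exact absurd (Finset.card_le_card hsub) (by omega)
  · intro h
    apply Finset.card_lt_card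
    constructor
    · intro d hd
      simp only [Finset.mem_filter, Finset.mem_univ, true_and] at *
      exact hd.trans h
    · intro hsub
      have ha : a ∈ Finset.univ.filter fun d => f d < f b := by
        simp [h]
      have := hsub ha
      simp at this

/-- if every three-voter single-crossing instance satisfies the
concave Monge inequality, then the weight function `ω` of every `n`-voter
single-crossing instance satisfies the concave Monge property. -/
theorem stmt5 {C : Type*} [Fintype C] [Nonempty C]
    (h3 : ∀ (rx ry rz : C → ℕ),
      Function.Injective rx → Function.Injective ry → Function.Injective rz →
      (∀ c c' : C, c ≠ c' → ¬(rx c < rx c' ∧ ry c' < ry c ∧ rz c < rz c')) →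
      ∀ (ρx ρy ρz : C → ℚ),
        (∀ c c' : C, rx c < rx c' → ρx c ≤ ρx c') →
        (∀ c c' : C, ry c < ry c' → ρy c ≤ ρy c') →
        (∀ c c' : C, rz c < rz c' → ρz c ≤ ρz c') →
        Finset.univ.inf' Finset.univ_nonempty (fun c : C => ρx c + ρy c) +
          Finset.univ.inf' Finset.univ_nonempty (fun c : C => ρy c + ρz c) ≤
        Finset.univ.inf' Finset.univ_nonempty (fun c : C => ρx c + ρy c + ρz c) +
          Finset.univ.inf' Finset.univ_nonempty (fun c : C => ρy c))
    {n : ℕ}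
    (rank : Fin n → C → ℕ)
    (hrank : ∀ v, Function.Injective (rank v))
    (hsc : ∀ i j l : Fin n, i < j → j < l → ∀ c c' : C, c ≠ c' →
      ¬(rank i c < rank i c' ∧ rank j c' < rank j c ∧ rank l c < rank l c'))
    (ρ : Fin n → C → ℚ)
    (hcons : ∀ v (c c' : C), rank v c < rank v c' → ρ v c ≤ ρ v c') :
    ∀ i j : ℕ, i + 1 < j → j < n →
      omegaFn ρ i j + omegaFn ρ (i + 1) (j + 1) ≤
        omegaFn ρ i (j + 1) + omegaFn ρ (i + 1) j := by
  intro i j hij hjn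
  classical
  have hi : i < n := by omega
  set vi : Fin n := ⟨i, hi⟩ with hvi
  set vj : Fin n := ⟨j, hjn⟩ with hvj
  set g : ℕ → C → ℚ := fun l c => if h : l < n then ρ ⟨l, h⟩ c else 0 with hg
  set ρy : C → ℚ := fun c => ∑ l ∈ Finset.Ico (i+1) j, g l c with hρy
  set key : C → ℚ ×ₗ ℕ := fun c => toLex (ρy c, rank vi c) with hkey
  have hkeyinj : Function.Injective key := by
    intro c c' h
    have h2 : (ofLex (key c)).2 = (ofLex (key c')).2 := by rw [h]
    exact hrank vi h2
  set ry : C → ℕ := fun c => (Finset.univ.filter fun d => key d < key c).card with hry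
  have hry_iff : ∀ c c', ry c < ry c' ↔ key c < key c' := fun c c' =>
    card_filter_lt_iff key c c'
  have hryinj : Function.Injective ry := by
    intro c c' h
    by_contra hne
    rcases lt_trichotomy (key c) (key c') with hk | hk | hk
    · exact absurd ((hry_iff c c').mpr hk) (by omega)
    · exact hne (hkeyinj hk)
    · exact absurd ((hry_iff c' c).mpr hk) (by omega)
  -- key facts about middle voters
  have hmid : ∀ c c' : C, c ≠ c' → rank vi c < rank vi c' → rank vj c < rank vj c' →
      ρy c ≤ ρy c' := by
    intro c c' hne h1 h2
    apply Finset.sum_le_sum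
    intro l hl
    rw [Finset.mem_Ico] at hl
    have hln : l < n := by omega
    set vl : Fin n := ⟨l, hln⟩ with hvl
    have hil : vi < vl := by simp [hvi, hvl, Fin.lt_def]; omega
    have hlj : vl < vj := by simp [hvl, hvj, Fin.lt_def]; omega
    have hnot := hsc vi vl vj hil hlj c c' hne
    push_neg at hnot
    have hne' : rank vl c ≠ rank vl c' := fun h => hne (hrank vl h)
    have : rank vl c < rank vl c' := by
      rcases lt_or_gt_of_ne hne' with h | h
      · exact h
      · exact absurd h2 (not_lt.mpr (hnot h1 h))
    have := hcons vl c c' this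
    simpa [hg, hln] using this
  have hsc3 : ∀ c c' : C, c ≠ c' →
      ¬(rank vi c < rank vi c' ∧ ry c' < ry c ∧ rank vj c < rank vj c') := by
    rintro c c' hne ⟨h1, h2, h3⟩
    have hk := (hry_iff c' c).mp h2
    rw [Prod.Lex.lt_iff] at hk
    have hle := hmid c c' hne h1 h3
    rcases hk with h | ⟨heq, hlt⟩
    · exact absurd h (not_lt.mpr hle)
    · exact absurd hlt (not_lt.mpr h1.le)
  have hconsy : ∀ c c' : C, ry c < ry c' → ρy c ≤ ρy c' := by
    intro c c' h
    have hk := (hry_iff c c').mp h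
    rw [Prod.Lex.lt_iff] at hk
    rcases hk with h | ⟨heq, _⟩
    · exact h.le
    · exact le_of_eq heq
  have key3 := h3 (rank vi) ry (rank vj) (hrank vi) hryinj (hrank vj) hsc3
    (ρ vi) ρy (ρ vj) (hcons vi) hconsy (hcons vj)
  -- rewrite the four omegas
  have e1 : omegaFn ρ i j =
      Finset.univ.inf' Finset.univ_nonempty (fun c : C => ρ vi c + ρy c) := by
    unfold omegaFn
    apply Finset.inf'_congr _ rfl
    intro c _
    rw [Finset.sum_eq_sum_Ico_succ_bot (by omega : i < j)]
    simp [hg, hi, hρy]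
    rfl
  have e2 : omegaFn ρ (i+1) (j+1) =
      Finset.univ.inf' Finset.univ_nonempty (fun c : C => ρy c + ρ vj c) := by
    unfold omegaFn
    apply Finset.inf'_congr _ rfl
    intro c _
    rw [Finset.sum_Ico_succ_top (by omega : i + 1 ≤ j)]
    simp [hg, hjn, hρy]
    rfl
  have e3 : omegaFn ρ i (j+1) =
      Finset.univ.inf' Finset.univ_nonempty (fun c : C => ρ vi c + ρy c + ρ vj c) := by
    unfold omegaFn
    apply Finset.inf'_congr _ rfl
    intro c _
    rw [Finset.sum_eq_sum_Ico_succ_bot (by omega : i < j + 1),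
      Finset.sum_Ico_succ_top (by omega : i + 1 ≤ j)]
    simp [hg, hi, hjn, hρy, add_assoc]
    rfl
  have e4 : omegaFn ρ (i+1) j =
      Finset.univ.inf' Finset.univ_nonempty (fun c : C => ρy c) := by
    unfold omegaFn
    apply Finset.inf'_congr _ rfl
    intro c _
    simp [hg, hρy]
  rw [e1, e2, e3, e4]
  exact key3
end

section
/- Let (≻_{v₁}, ≻_{v₂}, ≻_{v₃}) be a three-voter profile over a candidate set C that is single-crossing with respect to the order v₁ ⊲ v₂ ⊲ v₃, and let ρ be a misrepresentation function consistent with it. Then min_{c∈C}(ρ(v₁,c)+ρ(v₂,c)) + min_{c∈C}(ρ(v₂,c)+ρ(v₃,c)) ≤ min_{c∈C}(ρ(v₁,c)+ρ(v₂,c)+ρ(v₃,c)) + min_{c∈C} ρ(v₂,c). -/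
/-- the concave Monge inequality for a three-voter profile that is
single-crossing with respect to the order `v₁ ⊲ v₂ ⊲ v₃`, with a consistent
misrepresentation function. Each voter's linear order is given by an injective
ranking function (lower rank = more preferred). -/
theorem stmt6 {C : Type*} [Fintype C] [Nonempty C]
    (r₁ r₂ r₃ : C → ℕ)
    (h₁ : Function.Injective r₁) (h₂ : Function.Injective r₂)
    (h₃ : Function.Injective r₃)
    (hsc : ∀ c c' : C, c ≠ c' → ¬(r₁ c < r₁ c' ∧ r₂ c' < r₂ c ∧ r₃ c < r₃ c'))
    (ρ₁ ρ₂ ρ₃ : C → ℚ)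
    (hc₁ : ∀ c c' : C, r₁ c < r₁ c' → ρ₁ c ≤ ρ₁ c')
    (hc₂ : ∀ c c' : C, r₂ c < r₂ c' → ρ₂ c ≤ ρ₂ c')
    (hc₃ : ∀ c c' : C, r₃ c < r₃ c' → ρ₃ c ≤ ρ₃ c') :
    Finset.univ.inf' Finset.univ_nonempty (fun c : C => ρ₁ c + ρ₂ c) +
      Finset.univ.inf' Finset.univ_nonempty (fun c : C => ρ₂ c + ρ₃ c) ≤
    Finset.univ.inf' Finset.univ_nonempty (fun c : C => ρ₁ c + ρ₂ c + ρ₃ c) +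
      Finset.univ.inf' Finset.univ_nonempty (fun c : C => ρ₂ c) := by
  obtain ⟨a, -, ha⟩ := Finset.exists_mem_eq_inf' (Finset.univ_nonempty (α := C))
    (fun c : C => ρ₁ c + ρ₂ c + ρ₃ c)
  obtain ⟨b, -, hb⟩ := Finset.exists_mem_eq_inf' (Finset.univ_nonempty (α := C))
    (fun c : C => ρ₂ c)
  rw [ha, hb]
  have L1 : ∀ c : C, Finset.univ.inf' Finset.univ_nonempty (fun c : C => ρ₁ c + ρ₂ c)
      ≤ ρ₁ c + ρ₂ c := fun c => Finset.inf'_le _ (Finset.mem_univ c)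
  have L2 : ∀ c : C, Finset.univ.inf' Finset.univ_nonempty (fun c : C => ρ₂ c + ρ₃ c)
      ≤ ρ₂ c + ρ₃ c := fun c => Finset.inf'_le _ (Finset.mem_univ c)
  by_cases hb1 : ρ₁ b ≤ ρ₁ a
  · have := add_le_add (L1 b) (L2 a)
    linarith
  by_cases hb3 : ρ₃ b ≤ ρ₃ a
  · have := add_le_add (L1 a) (L2 b)
    linarith
  · push_neg at hb1 hb3
    have hne : a ≠ b := by rintro rfl; exact lt_irrefl _ hb1
    have hr1 : r₁ a < r₁ b := by
      rcases lt_trichotomy (r₁ a) (r₁ b) with h | h | h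
      · exact h
      · exact absurd (h₁ h) hne
      · exact absurd (hc₁ b a h) (not_le.mpr hb1)
    have hr3 : r₃ a < r₃ b := by
      rcases lt_trichotomy (r₃ a) (r₃ b) with h | h | h
      · exact h
      · exact absurd (h₃ h) hne
      · exact absurd (hc₃ b a h) (not_le.mpr hb3)
    have hr2 : r₂ a < r₂ b := by
      have := hsc a b hne
      rcases lt_trichotomy (r₂ a) (r₂ b) with h | h | h
      · exact h
      · exact absurd (h₂ h) hne
      · exact absurd ⟨hr1, h, hr3⟩ this
    have h2 : ρ₂ a ≤ ρ₂ b := hc₂ a b hr2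
    have := add_le_add (L1 a) (L2 a)
    linarith
end

section
/- Let P be a profile over C = [m] with voters v₁, …, v_n that is single-crossing with respect to the order v₁ ⊲ ⋯ ⊲ v_n, and let ρ be a misrepresentation function consistent with P. Then the weight function ω(i,j) = min_{c∈C} Σ_{ℓ=i+1}^{j} ρ(v_ℓ, c) satisfies the concave Monge property: for all i, j with 0 ≤ i, i+1 < j, and j+1 ≤ n, it holds that ω(i,j) + ω(i+1,j+1) ≤ ω(i,j+1) + ω(i+1,j). -/
/-- for single-crossing preferences with a consistent
misrepresentation function, the weight function `ω` satisfies the concave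
Monge property. -/
theorem stmt7 {n : ℕ} {C : Type*} [Fintype C] [Nonempty C]
    (rank : Fin n → C → ℕ)
    (hrank : ∀ v, Function.Injective (rank v))
    (hsc : ∀ i j l : Fin n, i < j → j < l → ∀ c c' : C, c ≠ c' →
      ¬(rank i c < rank i c' ∧ rank j c' < rank j c ∧ rank l c < rank l c'))
    (ρ : Fin n → C → ℚ)
    (hcons : ∀ v (c c' : C), rank v c < rank v c' → ρ v c ≤ ρ v c') :
    ∀ i j : ℕ, i + 1 < j → j + 1 ≤ n →
      omegaFn ρ i j + omegaFn ρ (i + 1) (j + 1) ≤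
        omegaFn ρ i (j + 1) + omegaFn ρ (i + 1) j := by
  intro i j hij hjn
  have hi_n : i < n := by omega
  have hj_n : j < n := by omega
  set fi : Fin n := ⟨i, hi_n⟩ with hfi
  set fj : Fin n := ⟨j, hj_n⟩ with hfj
  -- abbreviations
  set F : C → ℕ → ℚ := fun c l => if h : l < n then ρ ⟨l, h⟩ c else 0 with hF
  set S : ℕ → ℕ → C → ℚ := fun a b c => ∑ l ∈ Finset.Ico a b, F c l with hS
  have homega : ∀ a b : ℕ, omegaFn ρ a b =
      Finset.univ.inf' Finset.univ_nonempty (fun c : C => S a b c) := fun a b => rfl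
  have hFi : ∀ c, F c i = ρ fi c := fun c => dif_pos hi_n
  have hFj : ∀ c, F c j = ρ fj c := fun c => dif_pos hj_n
  -- sum decompositions
  have hbot : ∀ c, S i j c = F c i + S (i + 1) j c := by
    intro c
    exact Finset.sum_eq_sum_Ico_succ_bot (by omega) _
  have htop : ∀ c, S (i + 1) (j + 1) c = S (i + 1) j c + F c j := by
    intro c
    exact Finset.sum_Ico_succ_top (by omega) _
  have hboth : ∀ c, S i (j + 1) c = F c i + S (i + 1) j c + F c j := by
    intro c
    have h1 : S i (j + 1) c = S i j c + F c j := Finset.sum_Ico_succ_top (by omega) _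
    rw [h1, hbot]
  -- minimizers of the RHS
  obtain ⟨c0, -, hc0⟩ :=
    Finset.exists_mem_eq_inf' (Finset.univ_nonempty (α := C)) (fun c => S i (j + 1) c)
  obtain ⟨d0, -, hd0⟩ :=
    Finset.exists_mem_eq_inf' (Finset.univ_nonempty (α := C)) (fun c => S (i + 1) j c)
  have hRHS1 : omegaFn ρ i (j + 1) = S i (j + 1) c0 := by rw [homega, hc0]
  have hRHS2 : omegaFn ρ (i + 1) j = S (i + 1) j d0 := by rw [homega, hd0]
  have hle1 : ∀ c, omegaFn ρ i j ≤ S i j c := by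
    intro c; rw [homega]; exact Finset.inf'_le _ (Finset.mem_univ c)
  have hle2 : ∀ c, omegaFn ρ (i + 1) (j + 1) ≤ S (i + 1) (j + 1) c := by
    intro c; rw [homega]; exact Finset.inf'_le _ (Finset.mem_univ c)
  -- from strict ρ to strict rank
  have hrk : ∀ (v : Fin n) (c d : C), ρ v c < ρ v d → rank v c < rank v d := by
    intro v c d hlt
    have hne : c ≠ d := by rintro rfl; exact lt_irrefl _ hlt
    have hne' : rank v c ≠ rank v d := fun h => hne (hrank v h)
    rcases lt_or_gt_of_ne hne' with h | h
    · exact h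
    · exact absurd (hcons v d c h) (not_le.mpr hlt)
  by_cases h1 : ρ fj d0 ≤ ρ fj c0
  · -- use (c0, d0)
    have A := hle1 c0
    have B := hle2 d0
    rw [hbot] at A
    rw [htop] at B
    rw [hRHS1, hRHS2, hboth]
    rw [hFj] at *
    linarith
  · by_cases h2 : ρ fi d0 ≤ ρ fi c0
    · -- use (d0, c0)
      have A := hle1 d0
      have B := hle2 c0
      rw [hbot] at A
      rw [htop] at B
      rw [hRHS1, hRHS2, hboth]
      rw [hFi] at *
      have hTd : S (i + 1) j d0 ≤ S (i + 1) j c0 := by rw [← hd0]; exact Finset.inf'_le _ (Finset.mem_univ c0)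
      linarith
    · -- both strict: single crossing gives T c0 ≤ T d0
      push_neg at h1 h2
      have hrkI : rank fi c0 < rank fi d0 := hrk fi c0 d0 h2
      have hrkJ : rank fj c0 < rank fj d0 := hrk fj c0 d0 h1
      have hne : c0 ≠ d0 := by rintro rfl; exact lt_irrefl _ h1
      have hT : S (i + 1) j c0 ≤ S (i + 1) j d0 := by
        apply Finset.sum_le_sum
        intro l hl
        rw [Finset.mem_Ico] at hl
        have hl_n : l < n := by omega
        set fl : Fin n := ⟨l, hl_n⟩ with hfl
        have hFl : ∀ c, F c l = ρ fl c := fun c => dif_pos hl_n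
        rw [hFl, hFl]
        have hilt : fi < fl := by simp [hfi, hfl, Fin.mk_lt_mk]; omega
        have hjlt : fl < fj := by simp [hfl, hfj, Fin.mk_lt_mk]; omega
        have hsc' := hsc fi fl fj hilt hjlt c0 d0 hne
        have hnl : ¬ rank fl d0 < rank fl c0 := fun h => hsc' ⟨hrkI, h, hrkJ⟩
        have hne' : rank fl c0 ≠ rank fl d0 := fun h => hne (hrank fl h)
        have : rank fl c0 < rank fl d0 := by omega
        exact hcons fl c0 d0 this
      have A := hle1 c0
      have B := hle2 c0
      rw [hbot] at A
      rw [htop] at B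
      rw [hRHS1, hRHS2, hboth]
      linarith
end

section
/- Let P be a profile over C = [m] single-crossing with respect to the voter order v₁ ⊲ ⋯ ⊲ v_n with the first voter ranking candidates as 1 ≻_{v₁} ⋯ ≻_{v₁} m, and let ρ be consistent with P. For i ∈ [n], c ∈ [m], ℓ ≥ 1, define D₁[i,ℓ,c] as the minimum of Σ_{j=i}^{n} ρ(v_j, w(v_j)) over all assignments w: {v_i,…,v_n} → [c:m] with |w({v_i,…,v_n})| ≤ ℓ and w(v_i) = c, and D₀[i,ℓ,c] as the same minimum without the constraint w(v_i) = c (both taken to be +∞ when no such assignment exists). Then for every i < n and all valid ℓ, c: D₁[i,ℓ,c] = ρ(v_i,c) + min{ D₁[i+1,ℓ,c], D₀[i+1,ℓ−1,c+1] }. -/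
/-- `lineD1 ρ i ℓ c` (extended-real valued, `⊤` when infeasible): the minimum
total dissatisfaction of voters `v_i, …, v_{n-1}` (0-indexed) over all
assignments `w` using committees of size at most `ℓ` contained in the
candidates `{c, c+1, …, m-1}`, with the extra constraint that voter `v_i` is
represented by candidate `c`. -/
noncomputable def lineD1 {n m : ℕ} (ρ : Fin n → Fin m → ℚ) (i ℓ c : ℕ) : EReal :=
  sInf {x : EReal | ∃ w : Fin n → Fin m,
    (∀ j : Fin n, i ≤ (j : ℕ) → c ≤ ((w j) : ℕ)) ∧
    ((Finset.univ.filter fun j : Fin n => i ≤ (j : ℕ)).image w).card ≤ ℓ ∧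
    (∀ j : Fin n, (j : ℕ) = i → ((w j) : ℕ) = c) ∧
    x = ((((∑ j ∈ Finset.univ.filter fun j : Fin n => i ≤ (j : ℕ), ρ j (w j)) : ℚ) : ℝ) : EReal)}

/-- `lineD0 ρ i ℓ c`: as `lineD1` but without the constraint on voter `v_i`. -/
noncomputable def lineD0 {n m : ℕ} (ρ : Fin n → Fin m → ℚ) (i ℓ c : ℕ) : EReal :=
  sInf {x : EReal | ∃ w : Fin n → Fin m,
    (∀ j : Fin n, i ≤ (j : ℕ) → c ≤ ((w j) : ℕ)) ∧
    ((Finset.univ.filter fun j : Fin n => i ≤ (j : ℕ)).image w).card ≤ ℓ ∧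
    x = ((((∑ j ∈ Finset.univ.filter fun j : Fin n => i ≤ (j : ℕ), ρ j (w j)) : ℚ) : ℝ) : EReal)}

/-- The set whose infimum is `lineD1`. -/
def S1set {n m : ℕ} (ρ : Fin n → Fin m → ℚ) (i ℓ c : ℕ) : Set EReal :=
  {x : EReal | ∃ w : Fin n → Fin m,
    (∀ j : Fin n, i ≤ (j : ℕ) → c ≤ ((w j) : ℕ)) ∧
    ((Finset.univ.filter fun j : Fin n => i ≤ (j : ℕ)).image w).card ≤ ℓ ∧
    (∀ j : Fin n, (j : ℕ) = i → ((w j) : ℕ) = c) ∧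
    x = ((((∑ j ∈ Finset.univ.filter fun j : Fin n => i ≤ (j : ℕ), ρ j (w j)) : ℚ) : ℝ) : EReal)}

/-- The set whose infimum is `lineD0`. -/
def S0set {n m : ℕ} (ρ : Fin n → Fin m → ℚ) (i ℓ c : ℕ) : Set EReal :=
  {x : EReal | ∃ w : Fin n → Fin m,
    (∀ j : Fin n, i ≤ (j : ℕ) → c ≤ ((w j) : ℕ)) ∧
    ((Finset.univ.filter fun j : Fin n => i ≤ (j : ℕ)).image w).card ≤ ℓ ∧
    x = ((((∑ j ∈ Finset.univ.filter fun j : Fin n => i ≤ (j : ℕ), ρ j (w j)) : ℚ) : ℝ) : EReal)}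

lemma lineD1_eq {n m : ℕ} (ρ : Fin n → Fin m → ℚ) (i ℓ c : ℕ) :
    lineD1 ρ i ℓ c = sInf (S1set ρ i ℓ c) := rfl

lemma lineD0_eq {n m : ℕ} (ρ : Fin n → Fin m → ℚ) (i ℓ c : ℕ) :
    lineD0 ρ i ℓ c = sInf (S0set ρ i ℓ c) := rfl

lemma S1set_finite {n m : ℕ} (ρ : Fin n → Fin m → ℚ) (i ℓ c : ℕ) :
    (S1set ρ i ℓ c).Finite := by
  apply Set.Finite.subset (Set.finite_range fun w : Fin n → Fin m =>
    ((((∑ j ∈ Finset.univ.filter fun j : Fin n => i ≤ (j : ℕ), ρ j (w j)) : ℚ) : ℝ) : EReal))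
  rintro x ⟨w, -, -, -, rfl⟩; exact ⟨w, rfl⟩

lemma S0set_finite {n m : ℕ} (ρ : Fin n → Fin m → ℚ) (i ℓ c : ℕ) :
    (S0set ρ i ℓ c).Finite := by
  apply Set.Finite.subset (Set.finite_range fun w : Fin n → Fin m =>
    ((((∑ j ∈ Finset.univ.filter fun j : Fin n => i ≤ (j : ℕ), ρ j (w j)) : ℚ) : ℝ) : EReal))
  rintro x ⟨w, -, -, rfl⟩; exact ⟨w, rfl⟩

lemma S1set_nonempty {n m : ℕ} (ρ : Fin n → Fin m → ℚ) (i ℓ c : ℕ)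
    (hc : c < m) (hℓ : 1 ≤ ℓ) : (S1set ρ i ℓ c).Nonempty := by
  refine ⟨_, (fun _ : Fin n => (⟨c, hc⟩ : Fin m)), fun j _ => le_refl c, ?_, fun j _ => rfl, rfl⟩
  calc ((Finset.univ.filter fun j : Fin n => i ≤ (j : ℕ)).image
        (fun _ : Fin n => (⟨c, hc⟩ : Fin m))).card
      ≤ ({⟨c, hc⟩} : Finset (Fin m)).card := by
        apply Finset.card_le_card
        intro x hx
        simp only [Finset.mem_image] at hx
        obtain ⟨a, -, rfl⟩ := hx
        simp
    _ ≤ ℓ := by simpa using hℓ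

lemma filter_ge_succ {n : ℕ} (i : ℕ) (hi : i < n) :
    (Finset.univ.filter fun j : Fin n => i ≤ (j:ℕ)) =
    insert (⟨i, hi⟩ : Fin n) (Finset.univ.filter fun j : Fin n => i+1 ≤ (j:ℕ)) := by
  ext j; simp [Fin.ext_iff]; omega

lemma mk_not_mem_filter {n : ℕ} (i : ℕ) (hi : i < n) :
    (⟨i, hi⟩ : Fin n) ∉ (Finset.univ.filter fun j : Fin n => i+1 ≤ (j:ℕ)) := by simp

lemma sum_ge_split {n : ℕ} (i : ℕ) (hi : i < n) (f : Fin n → ℚ) :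
    ∑ j ∈ Finset.univ.filter (fun j : Fin n => i ≤ (j:ℕ)), f j =
      f ⟨i, hi⟩ + ∑ j ∈ Finset.univ.filter (fun j : Fin n => i+1 ≤ (j:ℕ)), f j := by
  rw [filter_ge_succ i hi, Finset.sum_insert (mk_not_mem_filter i hi)]

/-- the recurrence for `D₁` in the dynamic program for
single-crossing preferences on a line. -/
theorem stmt8 {n m : ℕ} (hn : 0 < n)
    (rank : Fin n → Fin m → ℕ)
    (hrank : ∀ v, Function.Injective (rank v))
    (hsc : ∀ i j l : Fin n, i < j → j < l → ∀ c c' : Fin m, c ≠ c' →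
      ¬(rank i c < rank i c' ∧ rank j c' < rank j c ∧ rank l c < rank l c'))
    (hfirst : ∀ c : Fin m, rank ⟨0, hn⟩ c = (c : ℕ))
    (ρ : Fin n → Fin m → ℚ)
    (hcons : ∀ v (c c' : Fin m), rank v c < rank v c' → ρ v c ≤ ρ v c')
    (i ℓ c : ℕ) (hi : i + 1 < n) (hℓ : 1 ≤ ℓ) (hc : c < m) :
    lineD1 ρ i ℓ c =
      (((ρ ⟨i, by omega⟩ ⟨c, hc⟩ : ℚ) : ℝ) : EReal) +
        min (lineD1 ρ (i + 1) ℓ c) (lineD0 ρ (i + 1) (ℓ - 1) (c + 1)) := by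
  have hi0 : i < n := by omega
  set vi : Fin n := ⟨i, hi0⟩ with hvi
  set vi1 : Fin n := ⟨i+1, hi⟩ with hvi1
  set cF : Fin m := ⟨c, hc⟩ with hcF
  -- consistency from weak rank comparison
  have hcons' : ∀ (v : Fin n) (a b : Fin m), rank v a ≤ rank v b → ρ v a ≤ ρ v b := by
    intro v a b h
    rcases lt_or_eq_of_le h with h | h
    · exact hcons v a b h
    · rw [hrank v h]
  -- single-crossing suffix lemma
  have hsuf : ∀ (a b : Fin m), (a:ℕ) < (b:ℕ) → ∀ (t l : Fin n), 0 < (t:ℕ) → t < l →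
      rank t b < rank t a → rank l b < rank l a := by
    intro a b hab t l ht htl hpb
    rcases lt_or_ge (rank l b) (rank l a) with h | h
    · exact h
    have hne : a ≠ b := by intro h'; rw [h'] at hab; exact lt_irrefl _ hab
    have h' : rank l a < rank l b :=
      lt_of_le_of_ne h (fun he => hne (hrank l he))
    exact absurd ⟨by rw [hfirst, hfirst]; exact hab, hpb, h'⟩
      (hsc ⟨0, hn⟩ t l (by simpa [Fin.lt_def] using ht) htl a b hne)
  have hF1 : vi1 ∈ (Finset.univ.filter fun j : Fin n => i+1 ≤ (j:ℕ)) := by simp [hvi1]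
  have hFsub : (Finset.univ.filter fun j : Fin n => i+1 ≤ (j:ℕ)) ⊆
      (Finset.univ.filter fun j : Fin n => i ≤ (j:ℕ)) := by
    intro j hj
    simp only [Finset.mem_filter, Finset.mem_univ, true_and] at hj ⊢
    omega
  apply le_antisymm
  · -- LHS ≤ RHS
    -- Claim A : LHS ≤ ρ + D1'
    have claimA : lineD1 ρ i ℓ c ≤
        (((ρ vi cF : ℚ) : ℝ) : EReal) + lineD1 ρ (i+1) ℓ c := by
      have hmem := (S1set_nonempty ρ (i+1) ℓ c hc hℓ).csInf_mem (S1set_finite ρ (i+1) ℓ c)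
      obtain ⟨w, hw1, hw2, hw3, hsum⟩ := hmem
      rw [lineD1_eq ρ (i+1) ℓ c, lineD1_eq ρ i ℓ c, hsum]
      apply sInf_le
      refine ⟨fun j : Fin n => if (j:ℕ) = i then cF else w j, ?_, ?_, ?_, ?_⟩
      · intro j hj
        by_cases h : (j:ℕ) = i
        · simp [h, hcF]
        · have : i + 1 ≤ (j:ℕ) := by omega
          simpa [h] using hw1 j this
      · have himg : ((Finset.univ.filter fun j : Fin n => i ≤ (j:ℕ)).image
            (fun j : Fin n => if (j:ℕ) = i then cF else w j)) =
            ((Finset.univ.filter fun j : Fin n => i+1 ≤ (j:ℕ)).image w) := by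
          rw [filter_ge_succ i hi0, Finset.image_insert]
          have h1 : (if ((⟨i, hi0⟩ : Fin n) : ℕ) = i then cF else w ⟨i, hi0⟩) = cF := if_pos rfl
          rw [h1]
          have h2 : ((Finset.univ.filter fun j : Fin n => i+1 ≤ (j:ℕ)).image
              (fun j : Fin n => if (j:ℕ) = i then cF else w j)) =
              ((Finset.univ.filter fun j : Fin n => i+1 ≤ (j:ℕ)).image w) := by
            apply Finset.image_congr
            intro j hj
            simp only [Finset.mem_filter, Finset.mem_coe] at hj
            have : (j:ℕ) ≠ i := by omega
            simp [this]
          rw [h2]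
          apply Finset.insert_eq_self.mpr
          refine Finset.mem_image.mpr ⟨vi1, hF1, ?_⟩
          have := hw3 vi1 rfl
          exact Fin.ext this
        rw [himg]; exact hw2
      · intro j hj; simp [hj, hcF]
      · have hsum' : ∑ j ∈ Finset.univ.filter (fun j : Fin n => i ≤ (j:ℕ)),
            ρ j ((fun j : Fin n => if (j:ℕ) = i then cF else w j) j) =
            ρ vi cF + ∑ j ∈ Finset.univ.filter (fun j : Fin n => i+1 ≤ (j:ℕ)), ρ j (w j) := by
          rw [sum_ge_split i hi0]
          congr 1
          · simp [hvi]
          · apply Finset.sum_congr rfl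
            intro j hj
            simp only [Finset.mem_filter] at hj
            have : (j:ℕ) ≠ i := by omega
            simp [this]
        rw [hsum']
        norm_cast
    -- Claim B : if the D0 set is nonempty, LHS ≤ ρ + D0'
    have claimB : (S0set ρ (i+1) (ℓ-1) (c+1)).Nonempty → lineD1 ρ i ℓ c ≤
        (((ρ vi cF : ℚ) : ℝ) : EReal) + lineD0 ρ (i+1) (ℓ-1) (c+1) := by
      intro hne
      have hmem := hne.csInf_mem (S0set_finite ρ (i+1) (ℓ-1) (c+1))
      obtain ⟨w, hw1, hw2, hsum⟩ := hmem
      rw [lineD0_eq ρ (i+1) (ℓ-1) (c+1), lineD1_eq ρ i ℓ c, hsum]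
      apply sInf_le
      refine ⟨fun j : Fin n => if (j:ℕ) = i then cF else w j, ?_, ?_, ?_, ?_⟩
      · intro j hj
        by_cases h : (j:ℕ) = i
        · simp [h, hcF]
        · have : i + 1 ≤ (j:ℕ) := by omega
          have := hw1 j this
          simp only [h, if_false]
          omega
      · have himg : ((Finset.univ.filter fun j : Fin n => i ≤ (j:ℕ)).image
            (fun j : Fin n => if (j:ℕ) = i then cF else w j)) =
            insert cF ((Finset.univ.filter fun j : Fin n => i+1 ≤ (j:ℕ)).image w) := by
          rw [filter_ge_succ i hi0, Finset.image_insert]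
          have h1 : (if ((⟨i, hi0⟩ : Fin n) : ℕ) = i then cF else w ⟨i, hi0⟩) = cF := if_pos rfl
          rw [h1]
          congr 1
          apply Finset.image_congr
          intro j hj
          simp only [Finset.mem_filter, Finset.mem_coe] at hj
          have : (j:ℕ) ≠ i := by omega
          simp [this]
        rw [himg]
        calc (insert cF ((Finset.univ.filter fun j : Fin n => i+1 ≤ (j:ℕ)).image w)).card
            ≤ ((Finset.univ.filter fun j : Fin n => i+1 ≤ (j:ℕ)).image w).card + 1 :=
              Finset.card_insert_le _ _
          _ ≤ (ℓ - 1) + 1 := by omega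
          _ = ℓ := by omega
      · intro j hj; simp [hj, hcF]
      · have hsum' : ∑ j ∈ Finset.univ.filter (fun j : Fin n => i ≤ (j:ℕ)),
            ρ j ((fun j : Fin n => if (j:ℕ) = i then cF else w j) j) =
            ρ vi cF + ∑ j ∈ Finset.univ.filter (fun j : Fin n => i+1 ≤ (j:ℕ)), ρ j (w j) := by
          rw [sum_ge_split i hi0]
          congr 1
          · simp [hvi]
          · apply Finset.sum_congr rfl
            intro j hj
            simp only [Finset.mem_filter] at hj
            have : (j:ℕ) ≠ i := by omega
            simp [this]
        rw [hsum']
        norm_cast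
    rcases min_cases (lineD1 ρ (i+1) ℓ c) (lineD0 ρ (i+1) (ℓ-1) (c+1)) with ⟨h, _⟩ | ⟨h, hle⟩
    · rw [h]; exact claimA
    · rw [h]
      by_cases hne : (S0set ρ (i+1) (ℓ-1) (c+1)).Nonempty
      · exact claimB hne
      · exfalso
        have hempty : S0set ρ (i+1) (ℓ-1) (c+1) = ∅ := Set.not_nonempty_iff_eq_empty.mp hne
        have htop : lineD0 ρ (i+1) (ℓ-1) (c+1) = ⊤ := by
          rw [lineD0_eq, hempty, sInf_empty]
        have hmem := (S1set_nonempty ρ (i+1) ℓ c hc hℓ).csInf_mem (S1set_finite ρ (i+1) ℓ c)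
        obtain ⟨w, -, -, -, hsum⟩ := hmem
        rw [htop, lineD1_eq, hsum] at hle
        exact not_top_lt hle
  · -- RHS ≤ LHS
    rw [lineD1_eq ρ i ℓ c]
    apply le_sInf
    rintro x ⟨w, h1, h2, h3, rfl⟩
    have hwvi : w vi = cF := Fin.ext (h3 vi rfl)
    have hsplit : ∑ j ∈ Finset.univ.filter (fun j : Fin n => i ≤ (j:ℕ)), ρ j (w j) =
        ρ vi cF + ∑ j ∈ Finset.univ.filter (fun j : Fin n => i+1 ≤ (j:ℕ)), ρ j (w j) := by
      rw [sum_ge_split i hi0, hwvi]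
    set rest : ℚ := ∑ j ∈ Finset.univ.filter (fun j : Fin n => i+1 ≤ (j:ℕ)), ρ j (w j)
      with hrest
    have key : min (lineD1 ρ (i+1) ℓ c) (lineD0 ρ (i+1) (ℓ-1) (c+1)) ≤ (((rest:ℚ):ℝ):EReal) := by
      by_cases H : rank vi1 cF ≤ rank vi1 (w vi1)
      · by_cases Hc : ∃ j : Fin n, i+1 ≤ (j:ℕ) ∧ w j = cF
        · -- reassign voter i+1 to c : witness for D1(i+1, ℓ, c)
          obtain ⟨j₀, hj₀1, hj₀2⟩ := Hc
          apply le_trans (min_le_left _ _)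
          rw [lineD1_eq]
          have hmem : (((( ∑ j ∈ Finset.univ.filter (fun j : Fin n => i+1 ≤ (j:ℕ)),
              ρ j ((fun j : Fin n => if (j:ℕ) = i+1 then cF else w j) j)) : ℚ) : ℝ) : EReal) ∈
              S1set ρ (i+1) ℓ c := by
            refine ⟨fun j : Fin n => if (j:ℕ) = i+1 then cF else w j, ?_, ?_, ?_, rfl⟩
            · intro j hj
              by_cases h : (j:ℕ) = i+1
              · simp [h, hcF]
              · have := h1 j (by omega)
                simpa [h] using (by omega : c ≤ ((w j):ℕ))
            · calc ((Finset.univ.filter fun j : Fin n => i+1 ≤ (j:ℕ)).image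
                  (fun j : Fin n => if (j:ℕ) = i+1 then cF else w j)).card
                  ≤ ((Finset.univ.filter fun j : Fin n => i ≤ (j:ℕ)).image w).card := by
                    apply Finset.card_le_card
                    intro x hx
                    simp only [Finset.mem_image] at hx ⊢
                    obtain ⟨a, ha, rfl⟩ := hx
                    by_cases h : (a:ℕ) = i+1
                    · exact ⟨j₀, hFsub (by simpa using hj₀1), by simp [h, hj₀2]⟩
                    · exact ⟨a, hFsub ha, by simp [h]⟩
                _ ≤ ℓ := h2
            · intro j hj; simp [hj, hcF]
          apply le_trans (sInf_le hmem)
          have : ∑ j ∈ Finset.univ.filter (fun j : Fin n => i+1 ≤ (j:ℕ)),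
              ρ j ((fun j : Fin n => if (j:ℕ) = i+1 then cF else w j) j) ≤ rest := by
            apply Finset.sum_le_sum
            intro j hj
            by_cases h : (j:ℕ) = i+1
            · have hj' : j = vi1 := Fin.ext h
              subst hj'
              simpa [h] using hcons' vi1 cF (w vi1) H
            · simp [h]
          exact_mod_cast this
        · -- nobody among i+1.. uses c : witness for D0(i+1, ℓ-1, c+1)
          apply le_trans (min_le_right _ _)
          rw [lineD0_eq]
          have hcnot : cF ∉ ((Finset.univ.filter fun j : Fin n => i+1 ≤ (j:ℕ)).image w) := by
            intro hcmem
            obtain ⟨j, hj, hj2⟩ := Finset.mem_image.mp hcmem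
            simp only [Finset.mem_filter] at hj
            exact Hc ⟨j, hj.2, hj2⟩
          have hmem : (((rest : ℚ) : ℝ) : EReal) ∈ S0set ρ (i+1) (ℓ-1) (c+1) := by
            refine ⟨w, ?_, ?_, rfl⟩
            · intro j hj
              have := h1 j (by omega)
              have hne : (w j : ℕ) ≠ c := by
                intro h
                exact Hc ⟨j, hj, Fin.ext h⟩
              omega
            · have himg : ((Finset.univ.filter fun j : Fin n => i ≤ (j:ℕ)).image w) =
                  insert cF ((Finset.univ.filter fun j : Fin n => i+1 ≤ (j:ℕ)).image w) := by
                rw [filter_ge_succ i hi0, Finset.image_insert, hwvi]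
              have := h2
              rw [himg, Finset.card_insert_of_notMem hcnot] at this
              omega
          exact sInf_le hmem
      · -- voter i+1 strictly prefers b = w vi1 over c : move everyone off c to b
        push_neg at H
        set b : Fin m := w vi1 with hb
        have hbne : b ≠ cF := by
          intro h; rw [h] at H; exact lt_irrefl _ H
        have hbc : c + 1 ≤ (b:ℕ) := by
          have := h1 vi1 (by simp [hvi1])
          have : c ≤ (b:ℕ) := this
          have hne : (b:ℕ) ≠ c := fun h => hbne (Fin.ext h)
          omega
        apply le_trans (min_le_right _ _)
        rw [lineD0_eq]
        have hmem : (((( ∑ j ∈ Finset.univ.filter (fun j : Fin n => i+1 ≤ (j:ℕ)),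
            ρ j ((fun j : Fin n => if w j = cF then b else w j) j)) : ℚ) : ℝ) : EReal) ∈
            S0set ρ (i+1) (ℓ-1) (c+1) := by
          refine ⟨fun j : Fin n => if w j = cF then b else w j, ?_, ?_, rfl⟩
          · intro j hj
            by_cases h : w j = cF
            · simpa [h] using hbc
            · have := h1 j (by omega)
              have hne : (w j : ℕ) ≠ c := fun h' => h (Fin.ext h')
              simp only [h, if_false]
              omega
          · have hcmem : cF ∈ ((Finset.univ.filter fun j : Fin n => i ≤ (j:ℕ)).image w) := by
              refine Finset.mem_image.mpr ⟨vi, ?_, hwvi⟩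
              simp [hvi]
            calc ((Finset.univ.filter fun j : Fin n => i+1 ≤ (j:ℕ)).image
                (fun j : Fin n => if w j = cF then b else w j)).card
                ≤ (((Finset.univ.filter fun j : Fin n => i ≤ (j:ℕ)).image w).erase cF).card := by
                  apply Finset.card_le_card
                  intro x hx
                  simp only [Finset.mem_image] at hx
                  obtain ⟨a, ha, rfl⟩ := hx
                  rw [Finset.mem_erase]
                  by_cases h : w a = cF
                  · refine ⟨by simpa [h] using hbne, ?_⟩
                    simp only [h, if_true]
                    exact Finset.mem_image.mpr ⟨vi1, hFsub hF1, rfl⟩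
                  · refine ⟨by simpa [h] using h, ?_⟩
                    simp only [h, if_false]
                    exact Finset.mem_image.mpr ⟨a, hFsub ha, rfl⟩
              _ = ((Finset.univ.filter fun j : Fin n => i ≤ (j:ℕ)).image w).card - 1 :=
                  Finset.card_erase_of_mem hcmem
              _ ≤ ℓ - 1 := by omega
        apply le_trans (sInf_le hmem)
        have : ∑ j ∈ Finset.univ.filter (fun j : Fin n => i+1 ≤ (j:ℕ)),
            ρ j ((fun j : Fin n => if w j = cF then b else w j) j) ≤ rest := by
          apply Finset.sum_le_sum
          intro j hj
          show ρ j (if w j = cF then b else w j) ≤ ρ j (w j)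
          by_cases h : w j = cF
          · rw [if_pos h, h]
            have hjne : j ≠ vi1 := by
              intro he; rw [he] at h; exact hbne h
            simp only [Finset.mem_filter] at hj
            have hjgt : vi1 < j := by
              rw [Fin.lt_def]
              have : (j:ℕ) ≠ i + 1 := fun he => hjne (Fin.ext he)
              simp only [hvi1]
              omega
            exact hcons j b cF (hsuf cF b (show c < (b:ℕ) from hbc) vi1 j (by simp [hvi1]) hjgt H)
          · rw [if_neg h]
        exact_mod_cast this
    calc ((((ρ vi cF : ℚ):ℝ):EReal)) + min (lineD1 ρ (i+1) ℓ c) (lineD0 ρ (i+1) (ℓ-1) (c+1))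
        ≤ (((ρ vi cF : ℚ):ℝ):EReal) + (((rest:ℚ):ℝ):EReal) := add_le_add (le_refl _) key
      _ = ((((ρ vi cF + rest : ℚ)):ℝ):EReal) := by norm_cast
      _ = (((( ∑ j ∈ Finset.univ.filter (fun j : Fin n => i ≤ (j:ℕ)), ρ j (w j)) : ℚ):ℝ):EReal) := by
          rw [hsplit]
end

section
/- Let T be a rooted tree on n vertices in which each vertex v has children child[v,1],…,child[v,n_v], and let k be a positive integer. Then Σ_{v} Σ_{i=1}^{n_v} min{k, |T_{child[v,i]}|} · min{k, |T_{v,i+1}|} ≤ 3nk. -/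
/-- `u` belongs to the subtree `T_v` of the rooted tree encoded by `parent`
(the root is a fixed point of `parent`, and `parent` strictly decreases
elsewhere, so ancestor chains have length at most `n`). -/
def inSub {n : ℕ} (parent : Fin n → Fin n) (v u : Fin n) : Prop :=
  ∃ t ∈ Finset.range (n + 1), parent^[t] u = v

instance {n : ℕ} (parent : Fin n → Fin n) (v u : Fin n) :
    Decidable (inSub parent v u) := by
  unfold inSub; infer_instance

/-- The vertex set of the tree `T_{v,i}` (0-indexed in `i`): the subtree `T_v`
with the subtrees rooted at the first `i` children of `v` removed; the children
of `v` are listed by `childList v`. In particular `T_{v,0} = T_v`. -/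
def Tvi {n : ℕ} (parent : Fin n → Fin n) (childList : Fin n → List (Fin n))
    (v : Fin n) (i : ℕ) : Finset (Fin n) :=
  Finset.univ.filter fun u =>
    inSub parent v u ∧
      ∀ i' : Fin (childList v).length, (i' : ℕ) < i →
        ¬ inSub parent ((childList v).get i') u



section TreeLemmas
variable {n : ℕ} (hn : 0 < n) {parent : Fin n → Fin n}
  (hroot : parent ⟨0, hn⟩ = ⟨0, hn⟩)
  (hpar : ∀ v : Fin n, v ≠ ⟨0, hn⟩ → parent v < v)

include hn hroot hpar

lemma par_le (x : Fin n) : parent x ≤ x := by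
  by_cases h : x = ⟨0, hn⟩
  · subst h; rw [hroot]
  · exact le_of_lt (hpar x h)

lemma iter_le (t : ℕ) (u : Fin n) : parent^[t] u ≤ u := by
  induction t with
  | zero => simp
  | succ s ih =>
    rw [Function.iterate_succ_apply']
    exact le_trans (par_le hn hroot hpar _) ih

lemma iter_reach : ∀ (t : ℕ) (u : Fin n), (u : ℕ) ≤ t → parent^[t] u = ⟨0, hn⟩ := by
  intro t
  induction t with
  | zero =>
    intro u hu
    have : u = ⟨0, hn⟩ := by
      apply Fin.ext; simpa using hu
    simpa using this
  | succ s ih =>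
    intro u hu
    rw [Function.iterate_succ_apply]
    by_cases h : u = ⟨0, hn⟩
    · subst h; rw [hroot]; exact ih _ (by simp)
    · exact ih _ (by have := hpar u h; omega)

lemma witness_small {t : ℕ} {u c : Fin n} (h : parent^[t] u = c)
    (hc : c ≠ ⟨0, hn⟩) : t < n := by
  by_contra hcon
  push_neg at hcon
  exact hc (h ▸ iter_reach hn hroot hpar t u (by omega))

omit hroot hpar in
lemma inSub_self (v : Fin n) : inSub parent v v :=
  ⟨0, by simp, rfl⟩

lemma inSub_le {v u : Fin n} (h : inSub parent v u) : v ≤ u := by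
  obtain ⟨t, -, ht⟩ := h
  exact ht ▸ iter_le hn hroot hpar t u

lemma child_ne_root {c v : Fin n} (hc : parent c = v) (hcv : c ≠ v) :
    c ≠ ⟨0, hn⟩ := by
  intro h; subst h; exact hcv (by rw [← hc, hroot])

lemma inSub_step {c v u : Fin n} (hc : parent c = v) (hcv : c ≠ v)
    (h : inSub parent c u) : inSub parent v u := by
  obtain ⟨t, -, ht⟩ := h
  have htn : t < n := witness_small hn hroot hpar ht (child_ne_root hn hroot hpar hc hcv)
  exact ⟨t + 1, by simp; omega, by rw [Function.iterate_succ_apply', ht, hc]⟩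

lemma inSub_cases {v u : Fin n} (h : inSub parent v u) :
    u = v ∨ ∃ c, parent c = v ∧ c ≠ v ∧ inSub parent c u := by
  obtain ⟨t, -, ht⟩ := h
  induction t with
  | zero => exact Or.inl ht
  | succ s ih =>
    rw [Function.iterate_succ_apply'] at ht
    by_cases hw : parent^[s] u = v
    · exact ih hw
    · refine Or.inr ⟨parent^[s] u, ht, hw, s, ?_, rfl⟩
      simp
      have := witness_small hn hroot hpar (rfl : parent^[s] u = parent^[s] u)
        (child_ne_root hn hroot hpar ht hw)
      omega

lemma inSub_unique_aux {c c' v u : Fin n} (hc : parent c = v) (hcv : c ≠ v)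
    (hc' : parent c' = v) (hcv' : c' ≠ v)
    {t t' : ℕ} (h1 : parent^[t] u = c) (h2 : parent^[t'] u = c')
    (hle : t ≤ t') : c = c' := by
  obtain ⟨s, rfl⟩ : ∃ s, t' = s + t := ⟨t' - t, by omega⟩
  rw [Function.iterate_add_apply, h1] at h2
  rcases Nat.eq_zero_or_pos s with rfl | hs
  · simpa using h2
  · exfalso
    obtain ⟨r, rfl⟩ : ∃ r, s = r + 1 := ⟨s - 1, by omega⟩
    rw [Function.iterate_succ_apply, hc] at h2
    have h3 : c' ≤ v := h2 ▸ iter_le hn hroot hpar r v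
    have h4 : v < c' := hc' ▸ hpar c' (child_ne_root hn hroot hpar hc' hcv')
    exact absurd h3 (not_le.mpr h4)

lemma inSub_unique {c c' v u : Fin n} (hc : parent c = v) (hcv : c ≠ v)
    (hc' : parent c' = v) (hcv' : c' ≠ v)
    (h1 : inSub parent c u) (h2 : inSub parent c' u) : c = c' := by
  obtain ⟨t, -, h1⟩ := h1
  obtain ⟨t', -, h2⟩ := h2
  rcases le_total t t' with h | h
  · exact inSub_unique_aux hn hroot hpar hc hcv hc' hcv' h1 h2 h
  · exact (inSub_unique_aux hn hroot hpar hc' hcv' hc hcv h2 h1 h).symm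

lemma not_inSub_child {c v : Fin n} (hc : parent c = v) (hcv : c ≠ v) :
    ¬ inSub parent c v := by
  intro h
  have h1 : c ≤ v := inSub_le hn hroot hpar h
  have h2 : v < c := hc ▸ hpar c (child_ne_root hn hroot hpar hc hcv)
  exact absurd h1 (not_le.mpr h2)

end TreeLemmas

def phi (k x : ℕ) : ℕ := x * min x k + k * (x - min x k)

lemma phi_le (k x : ℕ) : phi k x ≤ 2 * k * x := by
  unfold phi
  rcases le_total x k with h | h
  · rw [min_eq_left h, Nat.sub_self]
    nlinarith
  · rw [min_eq_right h]
    have : x - k ≤ x := Nat.sub_le _ _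
    nlinarith

lemma phi_key (k a b : ℕ) : min k a * min k b + phi k a + phi k b ≤ phi k (a + b) := by
  unfold phi
  rcases le_total a k with ha | ha
  · rcases le_total b k with hb | hb
    · rcases le_total (a + b) k with hab | hab
      · rw [min_eq_right ha, min_eq_right hb, min_eq_left ha, min_eq_left hb,
          min_eq_left hab, Nat.sub_self, Nat.sub_self, Nat.sub_self]
        nlinarith
      · rw [min_eq_right ha, min_eq_right hb, min_eq_left ha, min_eq_left hb,
          min_eq_right hab, Nat.sub_self, Nat.sub_self]
        zify [hab]
        nlinarith [mul_nonneg (by linarith : (0:ℤ) ≤ (a:ℤ) + b - k) (by linarith : (0:ℤ) ≤ 2*(k:ℤ) - a - b),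
          mul_nonneg (by linarith : (0:ℤ) ≤ (k:ℤ) - a) (by linarith : (0:ℤ) ≤ (k:ℤ) - b)]
    · have hab : k ≤ a + b := le_trans hb (Nat.le_add_left _ _)
      rw [min_eq_right ha, min_eq_left hb, min_eq_left ha, min_eq_right hb,
        min_eq_right hab, Nat.sub_self]
      zify [hb, hab]
      nlinarith [mul_nonneg (by linarith : (0:ℤ) ≤ (k:ℤ) - a) (by exact_mod_cast Nat.zero_le a : (0:ℤ) ≤ (a:ℤ))]
  · rcases le_total b k with hb | hb
    · have hab : k ≤ a + b := le_trans ha (Nat.le_add_right _ _)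
      rw [min_eq_left ha, min_eq_right hb, min_eq_right ha, min_eq_left hb,
        min_eq_right hab, Nat.sub_self]
      zify [ha, hab]
      nlinarith [mul_nonneg (by linarith : (0:ℤ) ≤ (k:ℤ) - b) (by exact_mod_cast Nat.zero_le b : (0:ℤ) ≤ (b:ℤ))]
    · have hab : k ≤ a + b := le_trans ha (Nat.le_add_right _ _)
      rw [min_eq_left ha, min_eq_left hb, min_eq_right ha, min_eq_right hb,
        min_eq_right hab]
      zify [ha, hb, hab]
      ring_nf
      nlinarith []

section TviLemmas
set_option linter.unusedSectionVars false
variable {n : ℕ} (hn : 0 < n) {parent : Fin n → Fin n}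
  (hroot : parent ⟨0, hn⟩ = ⟨0, hn⟩)
  (hpar : ∀ v : Fin n, v ≠ ⟨0, hn⟩ → parent v < v)
  (childList : Fin n → List (Fin n))
  (hnd : ∀ v, (childList v).Nodup)
  (hmem : ∀ v u : Fin n, u ∈ childList v ↔ parent u = v ∧ u ≠ v)

include hn hroot hpar hnd hmem

lemma mem_Tvi {v u : Fin n} {i : ℕ} :
    u ∈ Tvi parent childList v i ↔
      inSub parent v u ∧ ∀ i' : Fin (childList v).length, (i' : ℕ) < i →
        ¬ inSub parent ((childList v).get i') u := by
  simp [Tvi]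

lemma mem_Tvi_zero {v u : Fin n} :
    u ∈ Tvi parent childList v 0 ↔ inSub parent v u := by
  simp [Tvi]

lemma card_split (v : Fin n) {i : ℕ} (hi : i < (childList v).length) :
    (Tvi parent childList v i).card =
      (Tvi parent childList ((childList v).get ⟨i, hi⟩) 0).card +
        (Tvi parent childList v (i + 1)).card := by
  set c := (childList v).get ⟨i, hi⟩ with hc
  have hcmem : c ∈ childList v := List.get_mem _ ⟨i, hi⟩
  obtain ⟨hcp, hcv⟩ := (hmem v c).mp hcmem
  rw [← Finset.card_union_of_disjoint]
  · congr 1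
    ext u
    simp only [Finset.mem_union, mem_Tvi hn hroot hpar childList hnd hmem,
      Nat.not_lt_zero, false_implies, implies_true, and_true]
    constructor
    · rintro ⟨h1, h2⟩
      by_cases hcu : inSub parent c u
      · exact Or.inl hcu
      · refine Or.inr ⟨h1, fun j hj => ?_⟩
        rcases Nat.lt_or_ge (j : ℕ) i with h | h
        · exact h2 j h
        · have : (j : ℕ) = i := by omega
          have : j = ⟨i, hi⟩ := Fin.ext this
          rw [this]; exact hcu
    · rintro (hcu | ⟨h1, h2⟩)
      · refine ⟨inSub_step hn hroot hpar hcp hcv hcu, fun j hj hju => ?_⟩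
        have hjmem : (childList v).get j ∈ childList v := List.get_mem _ j
        obtain ⟨hjp, hjv⟩ := (hmem v _).mp hjmem
        have : (childList v).get j = c :=
          inSub_unique hn hroot hpar hjp hjv hcp hcv hju hcu
        have hji : j = ⟨i, hi⟩ := (List.Nodup.get_inj_iff (hnd v)).mp (this.trans hc)
        rw [hji] at hj
        exact absurd hj (by simp)
      · exact ⟨h1, fun j hj => h2 j (Nat.lt_succ_of_lt hj)⟩
  · rw [Finset.disjoint_left]
    intro u hu1 hu2
    rw [mem_Tvi_zero hn hroot hpar childList hnd hmem] at hu1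
    rw [mem_Tvi hn hroot hpar childList hnd hmem] at hu2
    exact hu2.2 ⟨i, hi⟩ (by simp) hu1

lemma card_last (v : Fin n) :
    (Tvi parent childList v (childList v).length).card = 1 := by
  have : Tvi parent childList v (childList v).length = {v} := by
    ext u
    rw [mem_Tvi hn hroot hpar childList hnd hmem, Finset.mem_singleton]
    constructor
    · rintro ⟨h1, h2⟩
      rcases inSub_cases hn hroot hpar h1 with h | ⟨c, hcp, hcv, hcu⟩
      · exact h
      · exfalso
        have hcmem : c ∈ childList v := (hmem v c).mpr ⟨hcp, hcv⟩
        obtain ⟨j, hj⟩ := List.mem_iff_get.mp hcmem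
        exact h2 j j.isLt (hj ▸ hcu)
    · rintro rfl
      refine ⟨inSub_self hn u, fun j hj hju => ?_⟩
      have hjmem : (childList u).get j ∈ childList u := List.get_mem _ j
      obtain ⟨hjp, hjv⟩ := (hmem u _).mp hjmem
      exact not_inSub_child hn hroot hpar hjp hjv hju
  rw [this, Finset.card_singleton]

end TviLemmas


section MainPart
set_option linter.unusedSectionVars false
variable {n : ℕ} (hn : 0 < n) {parent : Fin n → Fin n}
  (hroot : parent ⟨0, hn⟩ = ⟨0, hn⟩)
  (hpar : ∀ v : Fin n, v ≠ ⟨0, hn⟩ → parent v < v)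
  (childList : Fin n → List (Fin n))
  (hnd : ∀ v, (childList v).Nodup)
  (hmem : ∀ v u : Fin n, u ∈ childList v ↔ parent u = v ∧ u ≠ v)

include hn hroot hpar hnd hmem

lemma per_v (k : ℕ) (v : Fin n) :
    (∑ i : Fin (childList v).length,
        (min k (Tvi parent childList ((childList v).get i) 0).card *
          min k (Tvi parent childList v ((i : ℕ) + 1)).card +
         phi k (Tvi parent childList ((childList v).get i) 0).card))
      ≤ phi k (Tvi parent childList v 0).card := by
  suffices H : ∀ d i, i + d = (childList v).length →
      (∑ j ∈ Finset.univ.filter (fun j : Fin (childList v).length => i ≤ (j : ℕ)),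
        (min k (Tvi parent childList ((childList v).get j) 0).card *
          min k (Tvi parent childList v ((j : ℕ) + 1)).card +
         phi k (Tvi parent childList ((childList v).get j) 0).card)) + phi k 1
        ≤ phi k (Tvi parent childList v i).card by
    have h0 := H (childList v).length 0 (Nat.zero_add _)
    rw [Finset.filter_true_of_mem (fun _ _ => Nat.zero_le _)] at h0
    exact le_trans (Nat.le_add_right _ _) h0
  intro d
  induction d with
  | zero =>
    intro i hi
    have hieq : i = (childList v).length := by omega
    subst hieq
    have hempty : Finset.univ.filter
        (fun j : Fin (childList v).length => (childList v).length ≤ (j : ℕ)) = ∅ := by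
      apply Finset.eq_empty_of_forall_notMem
      intro j hj
      simp at hj
      exact absurd hj (not_le.mpr j.isLt)
    rw [hempty, Finset.sum_empty, Nat.zero_add,
      card_last hn hroot hpar childList hnd hmem v]
  | succ d ih =>
    intro i hi
    have him : i < (childList v).length := by omega
    have hsplit : (Finset.univ.filter (fun j : Fin (childList v).length => i ≤ (j : ℕ)))
        = insert (⟨i, him⟩ : Fin (childList v).length)
            (Finset.univ.filter (fun j : Fin (childList v).length => i + 1 ≤ (j : ℕ))) := by
      ext j
      simp only [Finset.mem_filter, Finset.mem_univ, true_and, Finset.mem_insert,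
        Fin.ext_iff]
      omega
    rw [hsplit, Finset.sum_insert (by simp)]
    have hIH := ih (i + 1) (by omega)
    have hc := card_split hn hroot hpar childList hnd hmem v him
    have hkey := phi_key k (Tvi parent childList ((childList v).get ⟨i, him⟩) 0).card
        (Tvi parent childList v (i + 1)).card
    rw [← hc] at hkey
    simp only [Fin.val_mk] at *
    omega

lemma child_sum (g : Fin n → ℕ) :
    ∑ v : Fin n, ∑ i : Fin (childList v).length, g ((childList v).get i)
      = ∑ u ∈ Finset.univ.erase ⟨0, hn⟩, g u := by
  refine Eq.trans (Finset.sum_sigma' Finset.univ (fun v => Finset.univ)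
    (fun v i => g ((childList v).get i))) ?_
  apply Finset.sum_bij (fun (p : Σ v : Fin n, Fin (childList v).length) _ =>
    (childList p.1).get p.2)
  · intro p _
    have hm := (hmem p.1 _).mp (List.get_mem _ p.2)
    simp only [Finset.mem_erase, Finset.mem_univ, and_true]
    exact child_ne_root hn hroot hpar hm.1 hm.2
  · rintro ⟨pv, pi⟩ hp ⟨qv, qi⟩ hq hpq
    have hp' := (hmem pv _).mp (List.get_mem _ pi)
    have hq' := (hmem qv _).mp (List.get_mem _ qi)
    have h1 : pv = qv := by rw [← hp'.1, ← hq'.1]; exact congrArg parent hpq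
    subst h1
    have h2 : pi = qi := (List.Nodup.get_inj_iff (hnd pv)).mp hpq
    subst h2
    rfl
  · intro u hu
    simp only [Finset.mem_erase, Finset.mem_univ, and_true] at hu
    have hlt := hpar u hu
    have hmem' : u ∈ childList (parent u) :=
      (hmem _ u).mpr ⟨rfl, ne_of_gt hlt⟩
    obtain ⟨j, hj⟩ := List.mem_iff_get.mp hmem'
    exact ⟨⟨parent u, j⟩, by simp [Finset.mem_sigma], hj⟩
  · intro p _
    rfl

theorem stmt13' (k : ℕ) (hk : 0 < k) :
    (∑ v : Fin n, ∑ i : Fin (childList v).length,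
        min k (Tvi parent childList ((childList v).get i) 0).card *
          min k (Tvi parent childList v ((i : ℕ) + 1)).card) ≤ 3 * n * k := by
  have hsum : (∑ v : Fin n, ∑ i : Fin (childList v).length,
        min k (Tvi parent childList ((childList v).get i) 0).card *
          min k (Tvi parent childList v ((i : ℕ) + 1)).card)
      + (∑ v : Fin n, ∑ i : Fin (childList v).length,
          phi k (Tvi parent childList ((childList v).get i) 0).card)
      ≤ ∑ v : Fin n, phi k (Tvi parent childList v 0).card := by
    rw [← Finset.sum_add_distrib]
    apply Finset.sum_le_sum
    intro v _
    rw [← Finset.sum_add_distrib]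
    exact per_v hn hroot hpar childList hnd hmem k v
  rw [child_sum hn hroot hpar childList hnd hmem
    (fun u => phi k (Tvi parent childList u 0).card)] at hsum
  have hsplit : (∑ v : Fin n, phi k (Tvi parent childList v 0).card)
      = phi k (Tvi parent childList (⟨0, hn⟩ : Fin n) 0).card
        + ∑ u ∈ Finset.univ.erase ⟨0, hn⟩, phi k (Tvi parent childList u 0).card :=
    (Finset.add_sum_erase _ _ (Finset.mem_univ _)).symm
  rw [hsplit] at hsum
  have hmain := Nat.le_of_add_le_add_right hsum
  have hcard : (Tvi parent childList (⟨0, hn⟩ : Fin n) 0).card ≤ n :=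
    le_trans (Finset.card_le_univ _) (by simp)
  calc (∑ v : Fin n, ∑ i : Fin (childList v).length,
        min k (Tvi parent childList ((childList v).get i) 0).card *
          min k (Tvi parent childList v ((i : ℕ) + 1)).card)
      ≤ phi k (Tvi parent childList (⟨0, hn⟩ : Fin n) 0).card := hmain
    _ ≤ 2 * k * (Tvi parent childList (⟨0, hn⟩ : Fin n) 0).card := phi_le _ _
    _ ≤ 2 * k * n := Nat.mul_le_mul_left _ hcard
    _ ≤ 3 * n * k := by nlinarith

end MainPart

/-- in a rooted tree on `n` vertices, for every positive
integer `k`,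
`Σ_v Σ_i min{k, |T_{child[v,i]}|} · min{k, |T_{v,i+1}|} ≤ 3nk`. -/
theorem stmt13 {n : ℕ} (hn : 0 < n) (k : ℕ) (hk : 0 < k)
    (parent : Fin n → Fin n)
    (hroot : parent ⟨0, hn⟩ = ⟨0, hn⟩)
    (hpar : ∀ v : Fin n, v ≠ ⟨0, hn⟩ → parent v < v)
    (childList : Fin n → List (Fin n))
    (hnd : ∀ v, (childList v).Nodup)
    (hmem : ∀ v u : Fin n, u ∈ childList v ↔ parent u = v ∧ u ≠ v) :
    (∑ v : Fin n, ∑ i : Fin (childList v).length,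
        min k (Tvi parent childList ((childList v).get i) 0).card *
          min k (Tvi parent childList v ((i : ℕ) + 1)).card) ≤ 3 * n * k := by
  exact stmt13' hn hroot hpar childList hnd hmem k hk
end

section
/- Fix positive integers n and k. Consider any finite process that starts from a multiset of positive integers summing to n and repeatedly replaces two elements a and b, where a > k, by their sum a + b, accruing a cost of k · min{k, b} at each such step. Then the total accrued cost over the whole process is at most nk. -/
/-- consider a finite merging process starting from a multiset of
positive integers summing to `n`; each step replaces two elements `a`, `b` with
`a > k` by `a + b`, at cost `k · min{k, b}`. The total cost is at most `nk`. -/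
theorem stmt14 (n k : ℕ) (hn : 0 < n) (hk : 0 < k)
    (N : ℕ) (M : ℕ → Multiset ℕ) (cost : ℕ → ℕ)
    (hpos : ∀ x ∈ M 0, 0 < x)
    (hsum : (M 0).sum = n)
    (hstep : ∀ t < N, ∃ a b : ℕ, a ∈ M t ∧ b ∈ (M t).erase a ∧ k < a ∧
      M (t + 1) = (a + b) ::ₘ (((M t).erase a).erase b) ∧
      cost t = k * min k b) :
    ∑ t ∈ Finset.range N, cost t ≤ n * k := by
  set Φ : ℕ → ℕ := fun t => ((M t).map (fun x => min k x)).sum with hΦ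
  have key : ∀ m, m ≤ N → ∑ t ∈ Finset.range m, cost t + k * Φ m = k * Φ 0 := by
    intro m hm
    induction m with
    | zero => simp
    | succ m ih =>
      have hm' : m ≤ N := Nat.le_of_succ_le hm
      obtain ⟨a, b, ha, hb, hka, hM, hc⟩ := hstep m (Nat.lt_of_succ_le hm)
      have h1 : M m = a ::ₘ (M m).erase a := (Multiset.cons_erase ha).symm
      have h2 : (M m).erase a = b ::ₘ ((M m).erase a).erase b := (Multiset.cons_erase hb).symm
      have hmink : min k a = k := min_eq_left hka.le
      have hminkab : min k (a + b) = k := min_eq_left (le_trans hka.le (Nat.le_add_right a b))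
      have hΦm : Φ m = Φ (m + 1) + min k b := by
        simp only [hΦ]
        rw [hM, h1, h2]
        simp [hmink, hminkab]
        ring
      rw [Finset.sum_range_succ, hc]
      have := ih hm'
      rw [hΦm, Nat.mul_add] at this
      omega
  have h0 : Φ 0 ≤ n := by
    rw [← hsum, hΦ]
    calc ((M 0).map (fun x => min k x)).sum ≤ ((M 0).map id).sum := by
          apply Multiset.sum_map_le_sum_map
          intro i _; exact min_le_right k i
      _ = (M 0).sum := by simp
  have := key N le_rfl
  calc ∑ t ∈ Finset.range N, cost t ≤ k * Φ 0 := by omega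
    _ ≤ k * n := Nat.mul_le_mul_left k h0
    _ = n * k := Nat.mul_comm k n
end

section
/- Let P be a profile over C that is single-crossing on the grid V = [n₁] × [n₂], let k ≤ |C|, and let w_opt be a canonical k-assignment for P. Then for every candidate c, the inverse image w_opt⁻¹(c) is a (possibly empty) subrectangle of V, i.e., a set of the form [i₀:i₁] × [j₀:j₁]. -/
/-- The grid graph on `[n₁] × [n₂]`: vertices `(i,j)` and `(i',j')` are
adjacent iff `|i−i'| + |j−j'| = 1`. -/
def gridGraph (n₁ n₂ : ℕ) : SimpleGraph (Fin n₁ × Fin n₂) :=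
  SimpleGraph.fromRel fun p q =>
    ((p.1 : ℤ) - (q.1 : ℤ)).natAbs + ((p.2 : ℤ) - (q.2 : ℤ)).natAbs = 1

/-- `L1` distance on the grid. -/
def L1 {n₁ n₂ : ℕ} (p q : Fin n₁ × Fin n₂) : ℕ :=
  ((p.1 : ℤ) - (q.1 : ℤ)).natAbs + ((p.2 : ℤ) - (q.2 : ℤ)).natAbs

lemma adj_L1 {n₁ n₂ : ℕ} {p q : Fin n₁ × Fin n₂} (h : (gridGraph n₁ n₂).Adj p q) : L1 p q = 1 := by
  rw [gridGraph, SimpleGraph.fromRel_adj] at h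
  obtain ⟨-, h | h⟩ := h <;> (unfold L1; omega)

lemma L1_triangle {n₁ n₂ : ℕ} (a b c : Fin n₁ × Fin n₂) : L1 a c ≤ L1 a b + L1 b c := by
  unfold L1; omega

lemma L1_le_length {n₁ n₂ : ℕ} {s t : Fin n₁ × Fin n₂} (W : (gridGraph n₁ n₂).Walk s t) :
    L1 s t ≤ W.length := by
  induction W with
  | nil => unfold L1; omega
  | @cons a b c hadj p ih =>
    have h1 := adj_L1 hadj
    have tri := L1_triangle a b c
    rw [SimpleGraph.Walk.length_cons]
    omega

lemma isPath_of_len {n₁ n₂ : ℕ} {s t : Fin n₁ × Fin n₂} (W : (gridGraph n₁ n₂).Walk s t)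
    (h : W.length = L1 s t) : W.IsPath := by
  induction W with
  | nil => exact SimpleGraph.Walk.IsPath.nil
  | @cons a b c hadj p ih =>
    rw [SimpleGraph.Walk.cons_isPath_iff]
    have h1 := adj_L1 hadj
    have h2 := L1_le_length p
    have tri := L1_triangle a b c
    rw [SimpleGraph.Walk.length_cons] at h
    have hp : p.length = L1 b c := by omega
    refine ⟨ih hp, fun hs => ?_⟩
    have hsplit := SimpleGraph.Walk.take_spec p hs
    have hlen : (p.takeUntil a hs).length + (p.dropUntil a hs).length = p.length := by
      conv_rhs => rw [← hsplit]
      rw [SimpleGraph.Walk.length_append]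
    have hd := L1_le_length (p.dropUntil a hs)
    omega

lemma step_adj {n₁ n₂ : ℕ} {s b : Fin n₁ × Fin n₂} (hne : s.1.val ≠ b.1.val ∨ s.2.val ≠ b.2.val)
    (hL : L1 s b = 1) : (gridGraph n₁ n₂).Adj s b := by
  rw [gridGraph, SimpleGraph.fromRel_adj]
  refine ⟨?_, Or.inl ?_⟩
  · intro hc; subst hc; omega
  · unfold L1 at hL; exact hL

lemma exists_geodesic {n₁ n₂ : ℕ} : ∀ (d : ℕ) (s t : Fin n₁ × Fin n₂), L1 s t = d →
    ∃ W : (gridGraph n₁ n₂).Walk s t, W.length = d := by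
  intro d
  induction d with
  | zero =>
    intro s t h
    have hs : s = t := by
      have h1 : s.1.val = t.1.val ∧ s.2.val = t.2.val := by unfold L1 at h; omega
      exact Prod.ext (Fin.ext h1.1) (Fin.ext h1.2)
    subst hs
    exact ⟨SimpleGraph.Walk.nil, rfl⟩
  | succ d ih =>
    intro s t h
    obtain ⟨b, hadj, hb⟩ : ∃ b, (gridGraph n₁ n₂).Adj s b ∧ L1 b t = d := by
      rcases lt_trichotomy s.1.val t.1.val with h1 | h1 | h1
      · refine ⟨(⟨s.1.val + 1, by have := t.1.isLt; omega⟩, s.2), step_adj ?_ ?_, ?_⟩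
        · left; simp only [Fin.val_mk]; omega
        · unfold L1; simp only [Fin.val_mk]; omega
        · unfold L1 at h ⊢; simp only [Fin.val_mk]; omega
      · rcases lt_trichotomy s.2.val t.2.val with h2 | h2 | h2
        · refine ⟨(s.1, ⟨s.2.val + 1, by have := t.2.isLt; omega⟩), step_adj ?_ ?_, ?_⟩
          · right; simp only [Fin.val_mk]; omega
          · unfold L1; simp only [Fin.val_mk]; omega
          · unfold L1 at h ⊢; simp only [Fin.val_mk]; omega
        · exfalso; unfold L1 at h; omega
        · refine ⟨(s.1, ⟨s.2.val - 1, by have := s.2.isLt; omega⟩), step_adj ?_ ?_, ?_⟩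
          · right; simp only [Fin.val_mk]; omega
          · unfold L1; simp only [Fin.val_mk]; omega
          · unfold L1 at h ⊢; simp only [Fin.val_mk]; omega
      · refine ⟨(⟨s.1.val - 1, by have := s.1.isLt; omega⟩, s.2), step_adj ?_ ?_, ?_⟩
        · left; simp only [Fin.val_mk]; omega
        · unfold L1; simp only [Fin.val_mk]; omega
        · unfold L1 at h ⊢; simp only [Fin.val_mk]; omega
    obtain ⟨W, hW⟩ := ih b t hb
    exact ⟨SimpleGraph.Walk.cons hadj W, by simp [hW]⟩

lemma exists_geodesic_through {n₁ n₂ : ℕ} {s u t : Fin n₁ × Fin n₂}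
    (hsu : s ≠ u) (hut : u ≠ t) (hadd : L1 s u + L1 u t = L1 s t) :
    ∃ X : (gridGraph n₁ n₂).Walk s t, X.IsPath ∧
      (∀ Y : (gridGraph n₁ n₂).Walk s t, X.length ≤ Y.length) ∧
      List.Sublist [s, u, t] X.support := by
  obtain ⟨W1, h1⟩ := exists_geodesic (L1 s u) s u rfl
  obtain ⟨W2, h2⟩ := exists_geodesic (L1 u t) u t rfl
  refine ⟨W1.append W2, ?_, ?_, ?_⟩
  · apply isPath_of_len; rw [SimpleGraph.Walk.length_append]; omega
  · intro Y
    have := L1_le_length Y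
    rw [SimpleGraph.Walk.length_append]; omega
  · rw [SimpleGraph.Walk.support_append]
    have hu : u ∈ W1.support.tail := by
      have h := W1.end_mem_support
      rw [SimpleGraph.Walk.support_eq_cons] at h
      rcases List.mem_cons.mp h with h | h
      · exact absurd h.symm hsu
      · exact h
    have ht' : t ∈ W2.support.tail := by
      have h := W2.end_mem_support
      rw [SimpleGraph.Walk.support_eq_cons] at h
      rcases List.mem_cons.mp h with h | h
      · exact absurd h.symm hut
      · exact h
    have A : List.Sublist [s, u] W1.support := by
      rw [SimpleGraph.Walk.support_eq_cons]
      exact List.Sublist.cons₂ _ (List.singleton_sublist.mpr hu)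
    have B : List.Sublist [t] W2.support.tail := List.singleton_sublist.mpr ht'
    simpa using A.append B

lemma L1_add_mk {n₁ n₂ : ℕ} (a b : Fin n₁ × Fin n₂) (x : Fin n₁) (y : Fin n₂)
    (hx : (a.1.val ≤ x.val ∧ x.val ≤ b.1.val) ∨ (b.1.val ≤ x.val ∧ x.val ≤ a.1.val))
    (hy : (a.2.val ≤ y.val ∧ y.val ≤ b.2.val) ∨ (b.2.val ≤ y.val ∧ y.val ≤ a.2.val)) :
    L1 a (x, y) + L1 (x, y) b = L1 a b := by
  unfold L1; simp only [Prod.fst, Prod.snd]; omega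

/-- Rectangle-closure: under single-crossing and canonicity, if `w s = w t`
then every grid point `L1`-between `s` and `t` gets the same candidate. -/
lemma rect_closed {n₁ n₂ m : ℕ}
    (rank : Fin n₁ × Fin n₂ → Fin m → ℕ)
    (hrank : ∀ v, Function.Injective (rank v))
    (hsc : ∀ s t : Fin n₁ × Fin n₂, ∀ X : (gridGraph n₁ n₂).Walk s t, X.IsPath →
      (∀ Y : (gridGraph n₁ n₂).Walk s t, X.length ≤ Y.length) →
      ∀ u₁ u₂ u₃ : Fin n₁ × Fin n₂, List.Sublist [u₁, u₂, u₃] X.support →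
        ∀ c c' : Fin m, c ≠ c' →
          ¬(rank u₁ c < rank u₁ c' ∧ rank u₂ c' < rank u₂ c ∧ rank u₃ c < rank u₃ c'))
    (w : Fin n₁ × Fin n₂ → Fin m)
    (hw_can : ∀ v, ∀ c ∈ Finset.univ.image w, rank v (w v) ≤ rank v c)
    {s t u : Fin n₁ × Fin n₂} (hst : w s = w t) (hadd : L1 s u + L1 u t = L1 s t) :
    w u = w s := by
  by_cases hsu : u = s
  · rw [hsu]
  by_cases hut : u = t
  · rw [hut, hst]
  by_contra hne
  obtain ⟨X, hpath, hmin, hsub⟩ := exists_geodesic_through (Ne.symm hsu) hut hadd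
  have himg : ∀ v : Fin n₁ × Fin n₂, w v ∈ Finset.univ.image w :=
    fun v => Finset.mem_image_of_mem w (Finset.mem_univ v)
  have hs1 : rank s (w s) < rank s (w u) :=
    lt_of_le_of_ne (hw_can s (w u) (himg u)) (fun h => hne (hrank s h).symm)
  have hu1 : rank u (w u) < rank u (w s) :=
    lt_of_le_of_ne (hw_can u (w s) (himg s)) (fun h => hne (hrank u h))
  have ht1 : rank t (w s) < rank t (w u) := by
    rw [hst]
    exact lt_of_le_of_ne (hw_can t (w u) (himg u))
      (fun h => hne ((hrank t h).symm.trans hst.symm))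
  exact hsc s t X hpath hmin s u t hsub (w s) (w u) (fun h => hne h.symm) ⟨hs1, hu1, ht1⟩

/-- for preferences single-crossing on the grid, every canonical
`k`-assignment assigns each candidate a (possibly empty) subrectangle of the
grid. A shortest `s`–`t` path is a path whose length is at most that of every
`s`–`t` walk. -/
theorem stmt15 {n₁ n₂ m k : ℕ}
    (rank : Fin n₁ × Fin n₂ → Fin m → ℕ)
    (hrank : ∀ v, Function.Injective (rank v))
    (hsc : ∀ s t : Fin n₁ × Fin n₂, ∀ X : (gridGraph n₁ n₂).Walk s t, X.IsPath →
      (∀ Y : (gridGraph n₁ n₂).Walk s t, X.length ≤ Y.length) →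
      ∀ u₁ u₂ u₃ : Fin n₁ × Fin n₂, List.Sublist [u₁, u₂, u₃] X.support →
        ∀ c c' : Fin m, c ≠ c' →
          ¬(rank u₁ c < rank u₁ c' ∧ rank u₂ c' < rank u₂ c ∧ rank u₃ c < rank u₃ c'))
    (ρ : Fin n₁ × Fin n₂ → Fin m → ℚ)
    (hcons : ∀ v (c c' : Fin m), rank v c < rank v c' → ρ v c ≤ ρ v c')
    (hk : k ≤ m)
    (w : Fin n₁ × Fin n₂ → Fin m)
    (hw_k : (Finset.univ.image w).card ≤ k)
    (hw_opt : ∀ w' : Fin n₁ × Fin n₂ → Fin m, (Finset.univ.image w').card ≤ k →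
      ∑ v, ρ v (w v) ≤ ∑ v, ρ v (w' v))
    (hw_can : ∀ v, ∀ c ∈ Finset.univ.image w, rank v (w v) ≤ rank v c) :
    ∀ c : Fin m, ∃ i₀ i₁ j₀ j₁ : ℕ,
      {p : Fin n₁ × Fin n₂ | w p = c} =
        {p : Fin n₁ × Fin n₂ |
          i₀ ≤ (p.1 : ℕ) ∧ (p.1 : ℕ) ≤ i₁ ∧ j₀ ≤ (p.2 : ℕ) ∧ (p.2 : ℕ) ≤ j₁} := by
  intro c
  by_cases hne : ∃ v, w v = c
  · obtain ⟨v0, hv0⟩ := hne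
    set S : Finset (Fin n₁ × Fin n₂) := Finset.univ.filter (fun p => w p = c) with hS
    have hSne : S.Nonempty := ⟨v0, by simp [hS, hv0]⟩
    have hwS : ∀ p ∈ S, w p = c := fun p hp => (Finset.mem_filter.mp hp).2
    obtain ⟨a, haS, ha⟩ := Finset.exists_mem_eq_inf' hSne (fun p => p.1.val)
    obtain ⟨b, hbS, hb⟩ := Finset.exists_mem_eq_sup' hSne (fun p => p.1.val)
    obtain ⟨e, heS, he⟩ := Finset.exists_mem_eq_inf' hSne (fun p => p.2.val)
    obtain ⟨f, hfS, hf⟩ := Finset.exists_mem_eq_sup' hSne (fun p => p.2.val)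
    refine ⟨S.inf' hSne (fun p => p.1.val), S.sup' hSne (fun p => p.1.val),
            S.inf' hSne (fun p => p.2.val), S.sup' hSne (fun p => p.2.val), ?_⟩
    ext p
    simp only [Set.mem_setOf_eq]
    constructor
    · intro hp
      have hpS : p ∈ S := Finset.mem_filter.mpr ⟨Finset.mem_univ _, hp⟩
      exact ⟨Finset.inf'_le (fun p => p.1.val) hpS, Finset.le_sup' (fun p => p.1.val) hpS,
             Finset.inf'_le (fun p => p.2.val) hpS, Finset.le_sup' (fun p => p.2.val) hpS⟩
    · rintro ⟨h1, h2, h3, h4⟩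
      rw [ha] at h1; rw [hb] at h2; rw [he] at h3; rw [hf] at h4
      -- step 1: (p.1, a.2)
      have hq1 : w (p.1, a.2) = c := by
        have h0 := rect_closed rank hrank hsc w hw_can
          (s := a) (t := b) (u := (p.1, a.2))
          (by rw [hwS a haS, hwS b hbS])
          (L1_add_mk a b p.1 a.2 (by omega) (by omega))
        rw [h0, hwS a haS]
      -- step 2: (p.1, e.2)
      have hr1 : w (p.1, e.2) = c := by
        have h0 := rect_closed rank hrank hsc w hw_can
          (s := (p.1, a.2)) (t := e) (u := (p.1, e.2))
          (by rw [hq1, hwS e heS])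
          (L1_add_mk (p.1, a.2) e p.1 e.2 (by simp only [Prod.fst, Prod.snd]; omega)
            (by simp only [Prod.fst, Prod.snd]; omega))
        rw [h0, hq1]
      -- step 3: (p.1, f.2)
      have hr2 : w (p.1, f.2) = c := by
        have h0 := rect_closed rank hrank hsc w hw_can
          (s := (p.1, a.2)) (t := f) (u := (p.1, f.2))
          (by rw [hq1, hwS f hfS])
          (L1_add_mk (p.1, a.2) f p.1 f.2 (by simp only [Prod.fst, Prod.snd]; omega)
            (by simp only [Prod.fst, Prod.snd]; omega))
        rw [h0, hq1]
      -- step 4: p itself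
      have h0 := rect_closed rank hrank hsc w hw_can
        (s := (p.1, e.2)) (t := (p.1, f.2)) (u := (p.1, p.2))
        (by rw [hr1, hr2])
        (L1_add_mk (p.1, e.2) (p.1, f.2) p.1 p.2 (by simp only [Prod.fst, Prod.snd]; omega)
          (by simp only [Prod.fst, Prod.snd]; omega))
      exact h0.trans hr1
  · refine ⟨1, 0, 1, 0, ?_⟩
    ext p
    simp only [Set.mem_setOf_eq]
    constructor
    · intro h; exact absurd ⟨p, h⟩ hne
    · rintro ⟨hh1, hh2, -, -⟩; omega
end

section
/- Let F be a tiling of the grid V = [n₁]×[n₂] into at most k subrectangles (a k-tiling). Then there exists a laminar tiling F' of V with at most k² rectangles that refines F. -/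
/-- The subrectangle `[i₀:i₁] × [j₀:j₁]` of the grid `[n₁] × [n₂]`
(coordinates are 0-indexed values of `Fin`s). -/
def gridRect (n₁ n₂ : ℕ) (i₀ i₁ j₀ j₁ : ℕ) : Finset (Fin n₁ × Fin n₂) :=
  Finset.univ.filter fun p =>
    i₀ ≤ (p.1 : ℕ) ∧ (p.1 : ℕ) ≤ i₁ ∧ j₀ ≤ (p.2 : ℕ) ∧ (p.2 : ℕ) ≤ j₁

/-- A finset of grid cells is a subrectangle. -/
def IsRect {n₁ n₂ : ℕ} (R : Finset (Fin n₁ × Fin n₂)) : Prop :=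
  ∃ i₀ i₁ j₀ j₁ : ℕ, R = gridRect n₁ n₂ i₀ i₁ j₀ j₁

/-- A tiling of the grid `[n₁] × [n₂]`: a partition of all grid cells into
nonempty subrectangles. -/
def IsTiling {n₁ n₂ : ℕ} (F : Finset (Finset (Fin n₁ × Fin n₂))) : Prop :=
  (∀ R ∈ F, IsRect R ∧ R.Nonempty) ∧
  (∀ R ∈ F, ∀ R' ∈ F, R ≠ R' → Disjoint R R') ∧
  (∀ p : Fin n₁ × Fin n₂, ∃ R ∈ F, p ∈ R)

/-- `F'` refines `F`: every rectangle of `F` is a union of rectangles of `F'`. -/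
def Refines {n₁ n₂ : ℕ} (F' F : Finset (Finset (Fin n₁ × Fin n₂))) : Prop :=
  ∀ R ∈ F, ∃ G ⊆ F', R = G.biUnion id

/-- `Laminar n₁ n₂ i₀ i₁ j₀ j₁ F`: `F` is a laminar tiling of the rectangle
`[i₀:i₁] × [j₀:j₁]`; either it is the single rectangle, or it is obtained by
splitting the rectangle with a vertical or a horizontal line and tiling both
sides laminarly. -/
inductive Laminar (n₁ n₂ : ℕ) : ℕ → ℕ → ℕ → ℕ → Finset (Finset (Fin n₁ × Fin n₂)) → Prop
  | single (i₀ i₁ j₀ j₁ : ℕ) : Laminar n₁ n₂ i₀ i₁ j₀ j₁ {gridRect n₁ n₂ i₀ i₁ j₀ j₁}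
  | vsplit {i₀ i₁ j₀ j₁ j : ℕ} {F₁ F₂ : Finset (Finset (Fin n₁ × Fin n₂))} :
      j₀ ≤ j → j < j₁ →
      Laminar n₁ n₂ i₀ i₁ j₀ j F₁ → Laminar n₁ n₂ i₀ i₁ (j + 1) j₁ F₂ →
      Laminar n₁ n₂ i₀ i₁ j₀ j₁ (F₁ ∪ F₂)
  | hsplit {i₀ i₁ j₀ j₁ i : ℕ} {F₁ F₂ : Finset (Finset (Fin n₁ × Fin n₂))} :
      i₀ ≤ i → i < i₁ →
      Laminar n₁ n₂ i₀ i j₀ j₁ F₁ → Laminar n₁ n₂ (i + 1) i₁ j₀ j₁ F₂ →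
      Laminar n₁ n₂ i₀ i₁ j₀ j₁ (F₁ ∪ F₂)


namespace Stmt17Aux

variable {n₁ n₂ : ℕ}

lemma mem_gridRect {i₀ i₁ j₀ j₁ : ℕ} {p : Fin n₁ × Fin n₂} :
    p ∈ gridRect n₁ n₂ i₀ i₁ j₀ j₁ ↔
      i₀ ≤ (p.1 : ℕ) ∧ (p.1 : ℕ) ≤ i₁ ∧ j₀ ≤ (p.2 : ℕ) ∧ (p.2 : ℕ) ≤ j₁ := by
  simp [gridRect]

noncomputable def imn (R : Finset (Fin n₁ × Fin n₂)) : ℕ :=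
  if h : R.Nonempty then R.inf' h (fun p => (p.1 : ℕ)) else 0

noncomputable def imx (R : Finset (Fin n₁ × Fin n₂)) : ℕ :=
  if h : R.Nonempty then R.sup' h (fun p => (p.1 : ℕ)) else 0

noncomputable def jmn (R : Finset (Fin n₁ × Fin n₂)) : ℕ :=
  if h : R.Nonempty then R.inf' h (fun p => (p.2 : ℕ)) else 0

noncomputable def jmx (R : Finset (Fin n₁ × Fin n₂)) : ℕ :=
  if h : R.Nonempty then R.sup' h (fun p => (p.2 : ℕ)) else 0

lemma bounds_of_mem {R : Finset (Fin n₁ × Fin n₂)} {p} (hp : p ∈ R) :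
    imn R ≤ (p.1 : ℕ) ∧ (p.1 : ℕ) ≤ imx R ∧ jmn R ≤ (p.2 : ℕ) ∧ (p.2 : ℕ) ≤ jmx R := by
  have hR : R.Nonempty := ⟨p, hp⟩
  simp only [imn, imx, jmn, jmx, dif_pos hR]
  exact ⟨Finset.inf'_le _ hp, Finset.le_sup' (fun p => (p.1:ℕ)) hp, Finset.inf'_le _ hp,
    Finset.le_sup' (fun p => (p.2:ℕ)) hp⟩

lemma exists_imn {R : Finset (Fin n₁ × Fin n₂)} (hR : R.Nonempty) :
    ∃ p ∈ R, (p.1 : ℕ) = imn R := by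
  simp only [imn, dif_pos hR]
  obtain ⟨p, hp, h⟩ := Finset.exists_mem_eq_inf' hR (fun p => (p.1 : ℕ))
  exact ⟨p, hp, h.symm⟩

lemma exists_imx {R : Finset (Fin n₁ × Fin n₂)} (hR : R.Nonempty) :
    ∃ p ∈ R, (p.1 : ℕ) = imx R := by
  simp only [imx, dif_pos hR]
  obtain ⟨p, hp, h⟩ := Finset.exists_mem_eq_sup' hR (fun p => (p.1 : ℕ))
  exact ⟨p, hp, h.symm⟩

lemma exists_jmn {R : Finset (Fin n₁ × Fin n₂)} (hR : R.Nonempty) :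
    ∃ p ∈ R, (p.2 : ℕ) = jmn R := by
  simp only [jmn, dif_pos hR]
  obtain ⟨p, hp, h⟩ := Finset.exists_mem_eq_inf' hR (fun p => (p.2 : ℕ))
  exact ⟨p, hp, h.symm⟩

lemma exists_jmx {R : Finset (Fin n₁ × Fin n₂)} (hR : R.Nonempty) :
    ∃ p ∈ R, (p.2 : ℕ) = jmx R := by
  simp only [jmx, dif_pos hR]
  obtain ⟨p, hp, h⟩ := Finset.exists_mem_eq_sup' hR (fun p => (p.2 : ℕ))
  exact ⟨p, hp, h.symm⟩

lemma imx_lt {R : Finset (Fin n₁ × Fin n₂)} (hR : R.Nonempty) : imx R < n₁ := by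
  obtain ⟨p, _, h⟩ := exists_imx hR
  exact h ▸ p.1.isLt

lemma jmx_lt {R : Finset (Fin n₁ × Fin n₂)} (hR : R.Nonempty) : jmx R < n₂ := by
  obtain ⟨p, _, h⟩ := exists_jmx hR
  exact h ▸ p.2.isLt

lemma jmn_le_jmx {R : Finset (Fin n₁ × Fin n₂)} (hR : R.Nonempty) : jmn R ≤ jmx R := by
  obtain ⟨p, hp⟩ := hR
  have := bounds_of_mem hp
  omega

lemma imn_le_imx {R : Finset (Fin n₁ × Fin n₂)} (hR : R.Nonempty) : imn R ≤ imx R := by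
  obtain ⟨p, hp⟩ := hR
  have := bounds_of_mem hp
  omega

lemma mem_of_bounds {R : Finset (Fin n₁ × Fin n₂)} (hrect : IsRect R) (hR : R.Nonempty)
    {p : Fin n₁ × Fin n₂} (h1 : imn R ≤ (p.1 : ℕ)) (h2 : (p.1 : ℕ) ≤ imx R)
    (h3 : jmn R ≤ (p.2 : ℕ)) (h4 : (p.2 : ℕ) ≤ jmx R) : p ∈ R := by
  obtain ⟨i₀, i₁, j₀, j₁, rfl⟩ := hrect
  obtain ⟨a, ha, ha'⟩ := exists_imn hR
  obtain ⟨b, hb, hb'⟩ := exists_imx hR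
  obtain ⟨c, hc, hc'⟩ := exists_jmn hR
  obtain ⟨d, hd, hd'⟩ := exists_jmx hR
  rw [mem_gridRect] at ha hb hc hd ⊢
  omega




lemma lam_props {i₀ i₁ j₀ j₁ : ℕ} {F' : Finset (Finset (Fin n₁ × Fin n₂))}
    (h : Laminar n₁ n₂ i₀ i₁ j₀ j₁ F') :
    i₀ ≤ i₁ → i₁ < n₁ → j₀ ≤ j₁ → j₁ < n₂ →
    (∀ P ∈ F', IsRect P ∧ P.Nonempty) ∧
    (∀ P ∈ F', ∀ Q ∈ F', P ≠ Q → Disjoint P Q) ∧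
    (∀ p : Fin n₁ × Fin n₂, p ∈ gridRect n₁ n₂ i₀ i₁ j₀ j₁ → ∃ P ∈ F', p ∈ P) ∧
    (∀ P ∈ F', P ⊆ gridRect n₁ n₂ i₀ i₁ j₀ j₁) := by
  induction h with
  | single i₀ i₁ j₀ j₁ =>
    intro h1 h2 h3 h4
    refine ⟨?_, ?_, ?_, ?_⟩
    · intro P hP
      rw [Finset.mem_singleton] at hP
      subst hP
      refine ⟨⟨i₀, i₁, j₀, j₁, rfl⟩, ⟨(⟨i₀, by omega⟩, ⟨j₀, by omega⟩), ?_⟩⟩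
      rw [mem_gridRect]
      simp only []
      omega
    · intro P hP Q hQ hne
      rw [Finset.mem_singleton] at hP hQ
      exact absurd (hP.trans hQ.symm) hne
    · intro p hp
      exact ⟨_, Finset.mem_singleton_self _, hp⟩
    · intro P hP
      rw [Finset.mem_singleton] at hP
      exact hP ▸ Finset.Subset.refl _
  | @vsplit i₀ i₁ j₀ j₁ j F₁ F₂ hj₀ hj h₁ h₂ ih₁ ih₂ =>
    intro hb1 hb2 hb3 hb4
    obtain ⟨p₁, d₁, c₁, s₁⟩ := ih₁ hb1 hb2 hj₀ (by omega)
    obtain ⟨p₂, d₂, c₂, s₂⟩ := ih₂ hb1 hb2 (by omega) hb4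
    have hdisjreg : ∀ P ∈ F₁, ∀ Q ∈ F₂, Disjoint P Q := by
      intro P hP Q hQ
      refine Finset.disjoint_left.2 fun x hxP hxQ => ?_
      have h1 := mem_gridRect.1 (s₁ P hP hxP)
      have h2 := mem_gridRect.1 (s₂ Q hQ hxQ)
      omega
    refine ⟨?_, ?_, ?_, ?_⟩
    · intro P hP
      rcases Finset.mem_union.1 hP with h | h
      exacts [p₁ P h, p₂ P h]
    · intro P hP Q hQ hne
      rcases Finset.mem_union.1 hP with hP' | hP' <;> rcases Finset.mem_union.1 hQ with hQ' | hQ'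
      · exact d₁ P hP' Q hQ' hne
      · exact hdisjreg P hP' Q hQ'
      · exact (hdisjreg Q hQ' P hP').symm
      · exact d₂ P hP' Q hQ' hne
    · intro p hp
      rw [mem_gridRect] at hp
      by_cases hcase : (p.2 : ℕ) ≤ j
      · obtain ⟨P, hP, hpP⟩ := c₁ p (mem_gridRect.2 ⟨hp.1, hp.2.1, hp.2.2.1, hcase⟩)
        exact ⟨P, Finset.mem_union_left _ hP, hpP⟩
      · obtain ⟨P, hP, hpP⟩ := c₂ p (mem_gridRect.2 ⟨hp.1, hp.2.1, by omega, hp.2.2.2⟩)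
        exact ⟨P, Finset.mem_union_right _ hP, hpP⟩
    · intro P hP x hx
      rcases Finset.mem_union.1 hP with h | h
      · have := mem_gridRect.1 (s₁ P h hx); rw [mem_gridRect]; omega
      · have := mem_gridRect.1 (s₂ P h hx); rw [mem_gridRect]; omega
  | @hsplit i₀ i₁ j₀ j₁ i F₁ F₂ hi₀ hi h₁ h₂ ih₁ ih₂ =>
    intro hb1 hb2 hb3 hb4
    obtain ⟨p₁, d₁, c₁, s₁⟩ := ih₁ hi₀ (by omega) hb3 hb4
    obtain ⟨p₂, d₂, c₂, s₂⟩ := ih₂ (by omega) hb2 hb3 hb4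
    have hdisjreg : ∀ P ∈ F₁, ∀ Q ∈ F₂, Disjoint P Q := by
      intro P hP Q hQ
      refine Finset.disjoint_left.2 fun x hxP hxQ => ?_
      have h1 := mem_gridRect.1 (s₁ P hP hxP)
      have h2 := mem_gridRect.1 (s₂ Q hQ hxQ)
      omega
    refine ⟨?_, ?_, ?_, ?_⟩
    · intro P hP
      rcases Finset.mem_union.1 hP with h | h
      exacts [p₁ P h, p₂ P h]
    · intro P hP Q hQ hne
      rcases Finset.mem_union.1 hP with hP' | hP' <;> rcases Finset.mem_union.1 hQ with hQ' | hQ'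
      · exact d₁ P hP' Q hQ' hne
      · exact hdisjreg P hP' Q hQ'
      · exact (hdisjreg Q hQ' P hP').symm
      · exact d₂ P hP' Q hQ' hne
    · intro p hp
      rw [mem_gridRect] at hp
      by_cases hcase : (p.1 : ℕ) ≤ i
      · obtain ⟨P, hP, hpP⟩ := c₁ p (mem_gridRect.2 ⟨hp.1, hcase, hp.2.2.1, hp.2.2.2⟩)
        exact ⟨P, Finset.mem_union_left _ hP, hpP⟩
      · obtain ⟨P, hP, hpP⟩ := c₂ p (mem_gridRect.2 ⟨by omega, hp.2.1, hp.2.2.1, hp.2.2.2⟩)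
        exact ⟨P, Finset.mem_union_right _ hP, hpP⟩
    · intro P hP x hx
      rcases Finset.mem_union.1 hP with h | h
      · have := mem_gridRect.1 (s₁ P h hx); rw [mem_gridRect]; omega
      · have := mem_gridRect.1 (s₂ P h hx); rw [mem_gridRect]; omega

lemma strip {F : Finset (Finset (Fin n₁ × Fin n₂))} (hF : IsTiling F)
    {c d : ℕ} (hcd : c ≤ d) (hd : d < n₂)
    (hstrip : ∀ p : Fin n₁ × Fin n₂, c ≤ (p.2:ℕ) → (p.2:ℕ) ≤ d →
      ∀ R ∈ F, p ∈ R → jmn R ≤ c ∧ d ≤ jmx R) :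
    ∀ m a, a < n₁ → n₁ - a ≤ m →
      ∃ F', Laminar n₁ n₂ a (n₁-1) c d F' ∧ (∀ P ∈ F', ∃ R ∈ F, P ⊆ R) ∧
        F'.card ≤ (F.filter fun R =>
          ∃ p ∈ R, a ≤ (p.1:ℕ) ∧ c ≤ (p.2:ℕ) ∧ (p.2:ℕ) ≤ d).card := by
  classical
  obtain ⟨hrect, hdisj, hcover⟩ := hF
  intro m
  induction m with
  | zero => intro a ha h; omega
  | succ m ih =>
    intro a ha hm
    set p : Fin n₁ × Fin n₂ := (⟨a, ha⟩, ⟨c, by omega⟩) with hpdef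
    obtain ⟨R, hRF, hpR⟩ := hcover p
    have hRne : R.Nonempty := (hrect R hRF).2
    have hRrect := (hrect R hRF).1
    have hpb := bounds_of_mem hpR
    have hjj := hstrip p (le_refl c) hcd R hRF hpR
    have hb1 : imn R ≤ a := hpb.1
    have hb2 : a ≤ imx R := hpb.2.1
    have hbx : imx R < n₁ := imx_lt hRne
    have hRfilt : R ∈ F.filter fun R =>
        ∃ q ∈ R, a ≤ (q.1:ℕ) ∧ c ≤ (q.2:ℕ) ∧ (q.2:ℕ) ≤ d :=
      Finset.mem_filter.2 ⟨hRF, p, hpR, le_refl a, le_refl c, hcd⟩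
    have hcard1 : 1 ≤ (F.filter fun R =>
        ∃ q ∈ R, a ≤ (q.1:ℕ) ∧ c ≤ (q.2:ℕ) ∧ (q.2:ℕ) ≤ d).card :=
      Finset.card_pos.2 ⟨R, hRfilt⟩
    by_cases hcase : imx R = n₁ - 1
    · refine ⟨{gridRect n₁ n₂ a (n₁-1) c d}, Laminar.single a (n₁-1) c d, ?_, ?_⟩
      · intro P hP
        rw [Finset.mem_singleton] at hP
        subst hP
        refine ⟨R, hRF, fun q hq => ?_⟩
        have hq' := mem_gridRect.1 hq
        exact mem_of_bounds hRrect hRne (by omega) (by omega) (by omega) (by omega)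
      · simpa using hcard1
    · have hlt : imx R < n₁ - 1 := by omega
      obtain ⟨F₂, hlam₂, hsub₂, hcard₂⟩ := ih (imx R + 1) (by omega) (by omega)
      refine ⟨{gridRect n₁ n₂ a (imx R) c d} ∪ F₂,
        Laminar.hsplit hb2 hlt (Laminar.single a (imx R) c d) hlam₂, ?_, ?_⟩
      · intro P hP
        rcases Finset.mem_union.1 hP with h | h
        · rw [Finset.mem_singleton] at h
          subst h
          refine ⟨R, hRF, fun q hq => ?_⟩
          have hq' := mem_gridRect.1 hq
          exact mem_of_bounds hRrect hRne (by omega) (by omega) (by omega) (by omega)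
        · exact hsub₂ P h
      · have hsubset : (F.filter fun R' =>
            ∃ q ∈ R', imx R + 1 ≤ (q.1:ℕ) ∧ c ≤ (q.2:ℕ) ∧ (q.2:ℕ) ≤ d) ⊆
            (F.filter fun R' =>
            ∃ q ∈ R', a ≤ (q.1:ℕ) ∧ c ≤ (q.2:ℕ) ∧ (q.2:ℕ) ≤ d).erase R := by
          intro x hx
          obtain ⟨hxF, q, hq, hq1, hq2, hq3⟩ := Finset.mem_filter.1 hx
          refine Finset.mem_erase.2 ⟨?_, Finset.mem_filter.2 ⟨hxF, q, hq, by omega, hq2, hq3⟩⟩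
          rintro rfl
          have := (bounds_of_mem hq).2.1
          omega
        have := Finset.card_le_card hsubset
        rw [Finset.card_erase_of_mem hRfilt] at this
        calc ({gridRect n₁ n₂ a (imx R) c d} ∪ F₂).card
            ≤ 1 + F₂.card := by
              simpa using Finset.card_union_le {gridRect n₁ n₂ a (imx R) c d} F₂
          _ ≤ _ := by omega

lemma strip_hyp {F : Finset (Finset (Fin n₁ × Fin n₂))} (hF : IsTiling F)
    {c d : ℕ} (hd : d < n₂)
    (hno : ∀ R ∈ F, c < jmn R → d < jmn R) :
    ∀ p : Fin n₁ × Fin n₂, c ≤ (p.2:ℕ) → (p.2:ℕ) ≤ d →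
      ∀ R ∈ F, p ∈ R → jmn R ≤ c ∧ d ≤ jmx R := by
  obtain ⟨hrect, hdisj, hcover⟩ := hF
  intro p hc hdp R hRF hpR
  have hb := bounds_of_mem hpR
  constructor
  · by_contra h
    have := hno R hRF (by omega)
    omega
  · by_contra h
    push_neg at h
    have hx : jmx R + 1 < n₂ := by omega
    obtain ⟨R', hR'F, hqR'⟩ := hcover (p.1, (⟨jmx R + 1, hx⟩ : Fin n₂))
    have hbq := bounds_of_mem hqR'
    dsimp only at hbq
    have hnotin : (p.1, (⟨jmx R + 1, hx⟩ : Fin n₂)) ∉ R := by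
      intro hqR
      have := bounds_of_mem hqR
      dsimp only at this
      omega
    have hRR' : R ≠ R' := fun he => hnotin (he ▸ hqR')
    have hkey : jmx R < jmn R' := by
      by_contra hk
      push_neg at hk
      have hy : jmx R < n₂ := by omega
      have hrR : (p.1, (⟨jmx R, hy⟩ : Fin n₂)) ∈ R :=
        mem_of_bounds (hrect R hRF).1 (hrect R hRF).2 (by dsimp only; omega)
          (by dsimp only; omega) (by dsimp only; exact jmn_le_jmx (hrect R hRF).2)
          (by dsimp only; omega)
      have hrR' : (p.1, (⟨jmx R, hy⟩ : Fin n₂)) ∈ R' :=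
        mem_of_bounds (hrect R' hR'F).1 (hrect R' hR'F).2 (by dsimp only; omega)
          (by dsimp only; omega) (by dsimp only; omega) (by dsimp only; omega)
      exact (Finset.disjoint_left.1 (hdisj R hRF R' hR'F hRR')) hrR hrR'
    have := hno R' hR'F (by omega)
    omega

lemma mainlem {F : Finset (Finset (Fin n₁ × Fin n₂))} (hF : IsTiling F) (hn₁ : 0 < n₁) :
    ∀ m c, c < n₂ → (∃ R ∈ F, jmn R = c) →
      ((F.image jmn).filter (fun x => c ≤ x)).card ≤ m →
      ∃ F', Laminar n₁ n₂ 0 (n₁-1) c (n₂-1) F' ∧ (∀ P ∈ F', ∃ R ∈ F, P ⊆ R) ∧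
        F'.card ≤ m * F.card := by
  classical
  intro m
  induction m with
  | zero =>
    intro c hc hcut hcount
    obtain ⟨R, hRF, hR⟩ := hcut
    have hcmem : c ∈ (F.image jmn).filter (fun x => c ≤ x) :=
      Finset.mem_filter.2 ⟨Finset.mem_image.2 ⟨R, hRF, hR⟩, le_refl c⟩
    have := Finset.card_pos.2 ⟨c, hcmem⟩
    omega
  | succ m ih =>
    intro c hc hcut hcount
    by_cases hne : ((F.image jmn).filter (fun x => c < x)).Nonempty
    · set c' := ((F.image jmn).filter (fun x => c < x)).min' hne with hc'def
      have hc'mem := Finset.min'_mem _ hne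
      rw [Finset.mem_filter] at hc'mem
      obtain ⟨R'', hR''F, hR''⟩ := Finset.mem_image.1 hc'mem.1
      have hcc' : c < c' := hc'mem.2
      have hc'n : c' < n₂ := by
        have h1 := jmn_le_jmx (hF.1 R'' hR''F).2
        have h2 := jmx_lt (hF.1 R'' hR''F).2
        omega
      have hno : ∀ R ∈ F, c < jmn R → (c' - 1) < jmn R := by
        intro R hRF hlt
        have hmem : jmn R ∈ (F.image jmn).filter (fun x => c < x) :=
          Finset.mem_filter.2 ⟨Finset.mem_image.2 ⟨R, hRF, rfl⟩, hlt⟩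
        have := Finset.min'_le _ _ hmem
        omega
      obtain ⟨F₁, hlam₁, hsub₁, hcard₁⟩ := strip hF (show c ≤ c' - 1 by omega)
        (show c' - 1 < n₂ by omega) (strip_hyp hF (show c' - 1 < n₂ by omega) hno)
        n₁ 0 hn₁ (by omega)
      obtain ⟨F₂, hlam₂, hsub₂, hcard₂⟩ := ih c' hc'n ⟨R'', hR''F, hR''⟩ (by
        have hsubset : ((F.image jmn).filter (fun x => c' ≤ x)) ⊆
            ((F.image jmn).filter (fun x => c ≤ x)).erase c := by
          intro x hx
          obtain ⟨hx1, hx2⟩ := Finset.mem_filter.1 hx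
          exact Finset.mem_erase.2 ⟨by omega, Finset.mem_filter.2 ⟨hx1, by omega⟩⟩
        have h1 := Finset.card_le_card hsubset
        obtain ⟨R, hRF, hR⟩ := hcut
        have hcmem : c ∈ (F.image jmn).filter (fun x => c ≤ x) :=
          Finset.mem_filter.2 ⟨Finset.mem_image.2 ⟨R, hRF, hR⟩, le_refl c⟩
        rw [Finset.card_erase_of_mem hcmem] at h1
        have := Finset.card_pos.2 ⟨c, hcmem⟩
        omega)
      have hlam₂' : Laminar n₁ n₂ 0 (n₁-1) ((c'-1)+1) (n₂-1) F₂ := by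
        rwa [show c' - 1 + 1 = c' from by omega]
      refine ⟨F₁ ∪ F₂, Laminar.vsplit (show c ≤ c' - 1 by omega)
        (show c' - 1 < n₂ - 1 by omega) hlam₁ hlam₂', ?_, ?_⟩
      · intro P hP
        rcases Finset.mem_union.1 hP with h | h
        exacts [hsub₁ P h, hsub₂ P h]
      · have h1 : F₁.card ≤ F.card :=
          le_trans hcard₁ (Finset.card_le_card (Finset.filter_subset _ _))
        calc (F₁ ∪ F₂).card ≤ F₁.card + F₂.card := Finset.card_union_le _ _
          _ ≤ F.card + m * F.card := Nat.add_le_add h1 hcard₂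
          _ = (m + 1) * F.card := by ring
    · have hno : ∀ R ∈ F, c < jmn R → (n₂ - 1) < jmn R := by
        intro R hRF hlt
        exact absurd ⟨jmn R, Finset.mem_filter.2 ⟨Finset.mem_image.2 ⟨R, hRF, rfl⟩, hlt⟩⟩ hne
      obtain ⟨F₁, hlam₁, hsub₁, hcard₁⟩ := strip hF (show c ≤ n₂ - 1 by omega)
        (show n₂ - 1 < n₂ by omega) (strip_hyp hF (show n₂ - 1 < n₂ by omega) hno)
        n₁ 0 hn₁ (by omega)
      refine ⟨F₁, hlam₁, hsub₁, ?_⟩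
      have h1 : F₁.card ≤ F.card :=
        le_trans hcard₁ (Finset.card_le_card (Finset.filter_subset _ _))
      calc F₁.card ≤ F.card := h1
        _ ≤ (m + 1) * F.card := Nat.le_mul_of_pos_left _ (by omega)

end Stmt17Aux

open Stmt17Aux in
/-- every `k`-tiling of the grid admits a laminar refinement
with at most `k²` rectangles. -/
theorem stmt17 {n₁ n₂ : ℕ} (hn₁ : 0 < n₁) (hn₂ : 0 < n₂) (k : ℕ) (hk : 0 < k)
    (F : Finset (Finset (Fin n₁ × Fin n₂)))
    (hF : IsTiling F) (hFk : F.card ≤ k) :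
    ∃ F' : Finset (Finset (Fin n₁ × Fin n₂)),
      IsTiling F' ∧ Laminar n₁ n₂ 0 (n₁ - 1) 0 (n₂ - 1) F' ∧
      F'.card ≤ k ^ 2 ∧ Refines F' F := by
  classical
  have hdisj := hF.2.1
  have hcover := hF.2.2
  obtain ⟨R₀, hR₀F, hp₀⟩ := hcover ((⟨0, hn₁⟩ : Fin n₁), (⟨0, hn₂⟩ : Fin n₂))
  have hcut0 : jmn R₀ = 0 := by
    have := (bounds_of_mem hp₀).2.2.1
    dsimp only at this
    omega
  have hcount : ((F.image jmn).filter (fun x => 0 ≤ x)).card ≤ k :=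
    calc ((F.image jmn).filter (fun x => 0 ≤ x)).card
        ≤ (F.image jmn).card := Finset.card_le_card (Finset.filter_subset _ _)
      _ ≤ F.card := Finset.card_image_le
      _ ≤ k := hFk
  obtain ⟨F', hlam, hsub, hcard⟩ := mainlem hF hn₁ k 0 hn₂ ⟨R₀, hR₀F, hcut0⟩ hcount
  obtain ⟨hP, hD, hC, hS⟩ := lam_props hlam (by omega) (by omega) (by omega) (by omega)
  have huniv : ∀ p : Fin n₁ × Fin n₂, p ∈ gridRect n₁ n₂ 0 (n₁-1) 0 (n₂-1) := by
    intro p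
    rw [mem_gridRect]
    have h1 := p.1.isLt
    have h2 := p.2.isLt
    omega
  refine ⟨F', ⟨hP, hD, fun p => hC p (huniv p)⟩, hlam, ?_, ?_⟩
  · calc F'.card ≤ k * F.card := hcard
      _ ≤ k * k := Nat.mul_le_mul_left k hFk
      _ = k ^ 2 := (pow_two k).symm
  · intro R hRF
    refine ⟨F'.filter (fun P => P ⊆ R), Finset.filter_subset _ _, ?_⟩
    apply Finset.Subset.antisymm
    · intro q hq
      obtain ⟨P, hPF', hqP⟩ := hC q (huniv q)
      obtain ⟨R', hR'F, hPR'⟩ := hsub P hPF'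
      have hRR : R' = R := by
        by_contra hne
        exact (Finset.disjoint_left.1 (hdisj R' hR'F R hRF hne)) (hPR' hqP) hq
      rw [Finset.mem_biUnion]
      exact ⟨P, Finset.mem_filter.2 ⟨hPF', hRR ▸ hPR'⟩, hqP⟩
    · intro q hq
      rw [Finset.mem_biUnion] at hq
      obtain ⟨P, hP', hqP⟩ := hq
      exact (Finset.mem_filter.1 hP').2 hqP
end

section
/- Let ρ: [n₁]×[n₂]×C → ℚ be a misrepresentation function on the grid of voters. For 1 ≤ i₀ ≤ i₁ ≤ n₁, 1 ≤ j₀ ≤ j₁ ≤ n₂ and ℓ ≥ 1, let L[i₀,i₁,j₀,j₁,ℓ] be the minimum total dissatisfaction over all laminar tilings of the rectangle [i₀:i₁]×[j₀:j₁] into at most ℓ rectangles. Then L[i₀,i₁,j₀,j₁,ℓ] = min{CONST, VERT, HOR}, where CONST = min_{c∈C} Σ_{i=i₀}^{i₁} Σ_{j=j₀}^{j₁} ρ(i,j,c); VERT = min over j₀ ≤ j < j₁ and 1 ≤ ℓ' < ℓ of (L[i₀,i₁,j₀,j,ℓ'] + L[i₀,i₁,j+1,j₁,ℓ−ℓ']);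 HOR = min over i₀ ≤ i < i₁ and 1 ≤ ℓ' < ℓ of (L[i₀,i,j₀,j₁,ℓ'] + L[i+1,i₁,j₀,j₁,ℓ−ℓ']), with VERT (resp. HOR) taken as +∞ when the ranges are empty. -/
/-- The total dissatisfaction of a tiling: each rectangle contributes the
minimum over candidates of the total dissatisfaction of its voters. -/
noncomputable def tilingCost {n₁ n₂ : ℕ} {C : Type*} [Fintype C] [Nonempty C]
    (ρ : Fin n₁ × Fin n₂ → C → ℚ) (F : Finset (Finset (Fin n₁ × Fin n₂))) : ℚ :=
  ∑ R ∈ F, Finset.univ.inf' Finset.univ_nonempty fun c : C => ∑ p ∈ R, ρ p c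

/-- `Lval ρ i₀ i₁ j₀ j₁ ℓ` (extended-real valued): the minimum total
dissatisfaction over all laminar tilings of the rectangle `[i₀:i₁] × [j₀:j₁]`
into at most `ℓ` rectangles. -/
noncomputable def Lval {n₁ n₂ : ℕ} {C : Type*} [Fintype C] [Nonempty C]
    (ρ : Fin n₁ × Fin n₂ → C → ℚ) (i₀ i₁ j₀ j₁ ℓ : ℕ) : EReal :=
  sInf {x : EReal | ∃ F : Finset (Finset (Fin n₁ × Fin n₂)),
    Laminar n₁ n₂ i₀ i₁ j₀ j₁ F ∧ F.card ≤ ℓ ∧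
    x = (((tilingCost ρ F : ℚ) : ℝ) : EReal)}

lemma gridRect_mono {n₁ n₂ : ℕ} {i₀ i₁ j₀ j₁ i₀' i₁' j₀' j₁' : ℕ}
    (h1 : i₀' ≤ i₀) (h2 : i₁ ≤ i₁') (h3 : j₀' ≤ j₀) (h4 : j₁ ≤ j₁') :
    gridRect n₁ n₂ i₀ i₁ j₀ j₁ ⊆ gridRect n₁ n₂ i₀' i₁' j₀' j₁' := by
  intro p hp
  simp only [gridRect, Finset.mem_filter, Finset.mem_univ, true_and] at *
  omega

lemma laminar_nonempty {n₁ n₂ i₀ i₁ j₀ j₁ : ℕ} {F : Finset (Finset (Fin n₁ × Fin n₂))}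
    (h : Laminar n₁ n₂ i₀ i₁ j₀ j₁ F) : F.Nonempty := by
  induction h with
  | single => exact ⟨_, Finset.mem_singleton_self _⟩
  | vsplit _ _ _ _ ih1 _ =>
    obtain ⟨R, hR⟩ := ih1; exact ⟨R, Finset.mem_union_left _ hR⟩
  | hsplit _ _ _ _ ih1 _ =>
    obtain ⟨R, hR⟩ := ih1; exact ⟨R, Finset.mem_union_left _ hR⟩

lemma laminar_rects {n₁ n₂ : ℕ} {i₀ i₁ j₀ j₁ : ℕ} {F : Finset (Finset (Fin n₁ × Fin n₂))}
    (h : Laminar n₁ n₂ i₀ i₁ j₀ j₁ F) :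
    i₀ ≤ i₁ → i₁ < n₁ → j₀ ≤ j₁ → j₁ < n₂ →
    ∀ R ∈ F, R ⊆ gridRect n₁ n₂ i₀ i₁ j₀ j₁ ∧ R.Nonempty := by
  induction h with
  | single i₀ i₁ j₀ j₁ =>
    intro hi hi₁ hj hj₁ R hR
    rw [Finset.mem_singleton] at hR; subst hR
    refine ⟨Finset.Subset.refl _, ⟨(⟨i₀, by omega⟩, ⟨j₀, by omega⟩), ?_⟩⟩
    simp only [gridRect, Finset.mem_filter, Finset.mem_univ, true_and]
    omega
  | vsplit hj₀ hjlt _ _ ih1 ih2 =>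
    intro hi hi₁ hj hj₁ R hR
    rcases Finset.mem_union.mp hR with hR | hR
    · obtain ⟨hsub, hne⟩ := ih1 hi hi₁ (by omega) (by omega) R hR
      exact ⟨hsub.trans (gridRect_mono le_rfl le_rfl le_rfl (by omega)), hne⟩
    · obtain ⟨hsub, hne⟩ := ih2 hi hi₁ (by omega) hj₁ R hR
      exact ⟨hsub.trans (gridRect_mono le_rfl le_rfl (by omega) le_rfl), hne⟩
  | hsplit hi₀ hilt _ _ ih1 ih2 =>
    intro hi hi₁ hj hj₁ R hR
    rcases Finset.mem_union.mp hR with hR | hR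
    · obtain ⟨hsub, hne⟩ := ih1 (by omega) (by omega) hj hj₁ R hR
      exact ⟨hsub.trans (gridRect_mono le_rfl (by omega) le_rfl le_rfl), hne⟩
    · obtain ⟨hsub, hne⟩ := ih2 (by omega) hi₁ hj hj₁ R hR
      exact ⟨hsub.trans (gridRect_mono (by omega) le_rfl le_rfl le_rfl), hne⟩

/-- disjointness of the two halves of a vertical split -/
lemma laminar_disjoint_v {n₁ n₂ : ℕ} {i₀ i₁ j₀ j₁ j : ℕ}
    {F₁ F₂ : Finset (Finset (Fin n₁ × Fin n₂))}
    (h1 : Laminar n₁ n₂ i₀ i₁ j₀ j F₁) (h2 : Laminar n₁ n₂ i₀ i₁ (j + 1) j₁ F₂)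
    (hi : i₀ ≤ i₁) (hi₁ : i₁ < n₁) (hj₀ : j₀ ≤ j) (hjlt : j < j₁) (hj₁ : j₁ < n₂) :
    Disjoint F₁ F₂ := by
  rw [Finset.disjoint_left]
  intro R hR1 hR2
  obtain ⟨hs1, hne⟩ := laminar_rects h1 hi hi₁ hj₀ (by omega) R hR1
  obtain ⟨hs2, -⟩ := laminar_rects h2 hi hi₁ (by omega) hj₁ R hR2
  obtain ⟨p, hp⟩ := hne
  have a1 := hs1 hp; have a2 := hs2 hp
  simp only [gridRect, Finset.mem_filter, Finset.mem_univ, true_and] at a1 a2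
  omega

lemma laminar_disjoint_h {n₁ n₂ : ℕ} {i₀ i₁ j₀ j₁ i : ℕ}
    {F₁ F₂ : Finset (Finset (Fin n₁ × Fin n₂))}
    (h1 : Laminar n₁ n₂ i₀ i j₀ j₁ F₁) (h2 : Laminar n₁ n₂ (i + 1) i₁ j₀ j₁ F₂)
    (hi₀ : i₀ ≤ i) (hilt : i < i₁) (hi₁ : i₁ < n₁) (hj : j₀ ≤ j₁) (hj₁ : j₁ < n₂) :
    Disjoint F₁ F₂ := by
  rw [Finset.disjoint_left]
  intro R hR1 hR2
  obtain ⟨hs1, hne⟩ := laminar_rects h1 hi₀ (by omega) hj hj₁ R hR1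
  obtain ⟨hs2, -⟩ := laminar_rects h2 (by omega) hi₁ hj hj₁ R hR2
  obtain ⟨p, hp⟩ := hne
  have a1 := hs1 hp; have a2 := hs2 hp
  simp only [gridRect, Finset.mem_filter, Finset.mem_univ, true_and] at a1 a2
  omega

lemma tilingCost_union {n₁ n₂ : ℕ} {C : Type*} [Fintype C] [Nonempty C]
    (ρ : Fin n₁ × Fin n₂ → C → ℚ) {F₁ F₂ : Finset (Finset (Fin n₁ × Fin n₂))}
    (hd : Disjoint F₁ F₂) :
    tilingCost ρ (F₁ ∪ F₂) = tilingCost ρ F₁ + tilingCost ρ F₂ :=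
  Finset.sum_union hd

lemma lval_le {n₁ n₂ : ℕ} {C : Type*} [Fintype C] [Nonempty C]
    (ρ : Fin n₁ × Fin n₂ → C → ℚ) {i₀ i₁ j₀ j₁ ℓ : ℕ}
    {F : Finset (Finset (Fin n₁ × Fin n₂))}
    (hF : Laminar n₁ n₂ i₀ i₁ j₀ j₁ F) (hc : F.card ≤ ℓ) :
    Lval ρ i₀ i₁ j₀ j₁ ℓ ≤ (((tilingCost ρ F : ℚ) : ℝ) : EReal) :=
  sInf_le ⟨F, hF, hc, rfl⟩

lemma lval_attained {n₁ n₂ : ℕ} {C : Type*} [Fintype C] [Nonempty C]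
    (ρ : Fin n₁ × Fin n₂ → C → ℚ) {i₀ i₁ j₀ j₁ ℓ : ℕ} (hℓ : 1 ≤ ℓ) :
    ∃ F : Finset (Finset (Fin n₁ × Fin n₂)),
      Laminar n₁ n₂ i₀ i₁ j₀ j₁ F ∧ F.card ≤ ℓ ∧
      Lval ρ i₀ i₁ j₀ j₁ ℓ = (((tilingCost ρ F : ℚ) : ℝ) : EReal) := by
  set s : Set EReal := {x : EReal | ∃ F : Finset (Finset (Fin n₁ × Fin n₂)),
    Laminar n₁ n₂ i₀ i₁ j₀ j₁ F ∧ F.card ≤ ℓ ∧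
    x = (((tilingCost ρ F : ℚ) : ℝ) : EReal)} with hs
  have hne : s.Nonempty := by
    refine ⟨_, {gridRect n₁ n₂ i₀ i₁ j₀ j₁}, Laminar.single _ _ _ _, ?_, rfl⟩
    simpa using hℓ
  have hfin : s.Finite := by
    apply Set.Finite.subset (Set.finite_range
      (fun F : Finset (Finset (Fin n₁ × Fin n₂)) => (((tilingCost ρ F : ℚ) : ℝ) : EReal)))
    rintro x ⟨F, -, -, rfl⟩
    exact ⟨F, rfl⟩
  have := hne.csInf_mem hfin
  rw [hs] at this
  obtain ⟨F, h1, h2, h3⟩ := this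
  exact ⟨F, h1, h2, h3⟩

/-- the dynamic-programming recurrence
`L[i₀,i₁,j₀,j₁,ℓ] = min{CONST, VERT, HOR}` for laminar tilings of the grid. -/
theorem stmt19 {n₁ n₂ : ℕ} {C : Type*} [Fintype C] [Nonempty C]
    (ρ : Fin n₁ × Fin n₂ → C → ℚ)
    (i₀ i₁ j₀ j₁ ℓ : ℕ)
    (hi : i₀ ≤ i₁) (hi₁ : i₁ < n₁) (hj : j₀ ≤ j₁) (hj₁ : j₁ < n₂) (hℓ : 1 ≤ ℓ) :
    Lval ρ i₀ i₁ j₀ j₁ ℓ =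
      min
        ((((Finset.univ.inf' Finset.univ_nonempty fun c : C =>
            ∑ p ∈ gridRect n₁ n₂ i₀ i₁ j₀ j₁, ρ p c : ℚ) : ℝ) : EReal))
        (min
          (sInf {x : EReal | ∃ j l' : ℕ, j₀ ≤ j ∧ j < j₁ ∧ 1 ≤ l' ∧ l' < ℓ ∧
            x = Lval ρ i₀ i₁ j₀ j l' + Lval ρ i₀ i₁ (j + 1) j₁ (ℓ - l')})
          (sInf {x : EReal | ∃ i l' : ℕ, i₀ ≤ i ∧ i < i₁ ∧ 1 ≤ l' ∧ l' < ℓ ∧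
            x = Lval ρ i₀ i j₀ j₁ l' + Lval ρ (i + 1) i₁ j₀ j₁ (ℓ - l')})) := by
  apply le_antisymm
  · refine le_min ?_ (le_min ?_ ?_)
    · have h := lval_le ρ (Laminar.single (n₁ := n₁) (n₂ := n₂) i₀ i₁ j₀ j₁)
        (by simpa using hℓ)
      simpa [tilingCost] using h
    · refine le_sInf ?_
      rintro x ⟨j, l', hj0, hjlt, hl1, hllt, rfl⟩
      obtain ⟨F₁, hF₁, hc₁, he₁⟩ :=
        lval_attained (i₀ := i₀) (i₁ := i₁) (j₀ := j₀) (j₁ := j) ρ hl1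
      obtain ⟨F₂, hF₂, hc₂, he₂⟩ :=
        lval_attained (i₀ := i₀) (i₁ := i₁) (j₀ := j + 1) (j₁ := j₁) ρ
          (show 1 ≤ ℓ - l' by omega)
      have hd := laminar_disjoint_v hF₁ hF₂ hi hi₁ hj0 hjlt hj₁
      have hle := lval_le (ℓ := ℓ) ρ (Laminar.vsplit hj0 hjlt hF₁ hF₂)
        (by rw [Finset.card_union_of_disjoint hd]; omega)
      rw [he₁, he₂]
      refine le_trans hle (le_of_eq ?_)
      rw [tilingCost_union ρ hd, Rat.cast_add, EReal.coe_add]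
    · refine le_sInf ?_
      rintro x ⟨i, l', hi0, hilt, hl1, hllt, rfl⟩
      obtain ⟨F₁, hF₁, hc₁, he₁⟩ :=
        lval_attained (i₀ := i₀) (i₁ := i) (j₀ := j₀) (j₁ := j₁) ρ hl1
      obtain ⟨F₂, hF₂, hc₂, he₂⟩ :=
        lval_attained (i₀ := i + 1) (i₁ := i₁) (j₀ := j₀) (j₁ := j₁) ρ
          (show 1 ≤ ℓ - l' by omega)
      have hd := laminar_disjoint_h hF₁ hF₂ hi0 hilt hi₁ hj hj₁
      have hle := lval_le (ℓ := ℓ) ρ (Laminar.hsplit hi0 hilt hF₁ hF₂)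
        (by rw [Finset.card_union_of_disjoint hd]; omega)
      rw [he₁, he₂]
      refine le_trans hle (le_of_eq ?_)
      rw [tilingCost_union ρ hd, Rat.cast_add, EReal.coe_add]
  · refine le_sInf ?_
    rintro x ⟨F, hF, hcard, rfl⟩
    cases hF with
    | single =>
      have h : tilingCost ρ {gridRect n₁ n₂ i₀ i₁ j₀ j₁} =
          Finset.univ.inf' Finset.univ_nonempty fun c : C =>
            ∑ p ∈ gridRect n₁ n₂ i₀ i₁ j₀ j₁, ρ p c := by
        simp [tilingCost]
      rw [h]
      exact min_le_left _ _
    | vsplit hj0 hjlt h1 h2 =>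
      rename_i j F₁ F₂
      have hd := laminar_disjoint_v h1 h2 hi hi₁ hj0 hjlt hj₁
      have hcU := Finset.card_union_of_disjoint hd
      have hn1 := Finset.card_pos.mpr (laminar_nonempty h1)
      have hn2 := Finset.card_pos.mpr (laminar_nonempty h2)
      refine le_trans (min_le_right _ _) (le_trans (min_le_left _ _) ?_)
      refine le_trans
        (sInf_le ⟨j, F₁.card, hj0, hjlt, hn1, by omega, rfl⟩) ?_
      have l1 := lval_le ρ h1 (le_refl F₁.card)
      have l2 := lval_le ρ h2 (show F₂.card ≤ ℓ - F₁.card by omega)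
      refine le_trans (add_le_add l1 l2) (le_of_eq ?_)
      rw [tilingCost_union ρ hd, Rat.cast_add, EReal.coe_add]
    | hsplit hi0 hilt h1 h2 =>
      rename_i i F₁ F₂
      have hd := laminar_disjoint_h h1 h2 hi0 hilt hi₁ hj hj₁
      have hcU := Finset.card_union_of_disjoint hd
      have hn1 := Finset.card_pos.mpr (laminar_nonempty h1)
      have hn2 := Finset.card_pos.mpr (laminar_nonempty h2)
      refine le_trans (min_le_right _ _) (le_trans (min_le_right _ _) ?_)
      refine le_trans
        (sInf_le ⟨i, F₁.card, hi0, hilt, hn1, by omega, rfl⟩) ?_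
      have l1 := lval_le ρ h1 (le_refl F₁.card)
      have l2 := lval_le ρ h2 (show F₂.card ≤ ℓ - F₁.card by omega)
      refine le_trans (add_le_add l1 l2) (le_of_eq ?_)
      rw [tilingCost_union ρ hd, Rat.cast_add, EReal.coe_add]
end
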